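/- arXiv:0910.4376 — 7 statements merged into one kernel-verified Lean document; each statement's English description precedes it below -/
import Mathlib

section
/- Let Γ be a finite simple graph and P a cycle in Γ (a closed walk v_1, v_2, ..., v_k, v_1). Define ν_P(O) for an acyclic orientation O as the number of edges of P oriented forward along the traversal minus the number oriented backward. Then ν_P is invariant under source-to-sink conversions: if O' is obtained from O by converting a source to a sink, then ν_P(O) = ν_P(O'). -/
variable {V : Type*}

/-- An acyclic orientation of a simple graph `G`. -/
structure AcyclicOrientation (G : SimpleGraph V) where
  dir : V → V → Prop
  dir_adj : ∀ {a b : V}, dir a b → G.Adj a b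
  total : ∀ {a b : V}, G.Adj a b → dir a b ∨ dir b a
  acyclic : ∀ a : V, ¬ Relation.TransGen dir a a

namespace AcyclicOrientation

variable {G : SimpleGraph V}

/-- `v` is a source: no edge points into `v`. -/
def IsSource (O : AcyclicOrientation G) (v : V) : Prop := ∀ a, ¬ O.dir a v

/-- `O'` is obtained from `O` by converting the source `v` into a sink. -/
def ClickAt (O : AcyclicOrientation G) (v : V) (O' : AcyclicOrientation G) : Prop :=
  O.IsSource v ∧ ∀ a b, (O'.dir a b ↔ (((a = v ∨ b = v) ∧ O.dir b a) ∨ (a ≠ v ∧ b ≠ v ∧ O.dir a b)))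

/-- One source-to-sink conversion relates `O` and `O'`. -/
def IsClick (O O' : AcyclicOrientation G) : Prop := ∃ v, O.ClickAt v O'

/-- Click-equivalence: reachability by a finite sequence of clicks. -/
def ClickEquiv (O O' : AcyclicOrientation G) : Prop :=
  Relation.ReflTransGen IsClick O O'

/-- `ClickSeq O c O'` : the list `c` is a click-sequence applicable to `O` with result `O'`. -/
inductive ClickSeq : AcyclicOrientation G → List V → AcyclicOrientation G → Prop
  | nil (O : AcyclicOrientation G) : ClickSeq O [] O
  | cons {O O' O'' : AcyclicOrientation G} {v : V} {c : List V} :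
      O.ClickAt v O' → ClickSeq O' c O'' → ClickSeq O (v :: c) O''

open scoped Classical in
/-- `ν_P(O)`: forward minus backward edges of the closed walk `p` under `O`. -/
noncomputable def nu (O : AcyclicOrientation G) {u : V} (p : G.Walk u u) : ℤ :=
  (p.darts.map (fun d => if O.dir d.toProd.1 d.toProd.2 then (1 : ℤ) else -1)).sum

/-- The `vw`-interval: vertices on a directed path from `v` to `w`. -/
def interval (O : AcyclicOrientation G) (v w : V) : Set V :=
  {a | Relation.ReflTransGen O.dir v a ∧ Relation.ReflTransGen O.dir a w}

end AcyclicOrientation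

open AcyclicOrientation

/-- The setoid of click-equivalence (equivalence relation generated by clicks). -/
def clickSetoid (G : SimpleGraph V) : Setoid (AcyclicOrientation G) :=
  ⟨Relation.EqvGen IsClick, Relation.EqvGen.is_equivalence _⟩

/-- `κ(G)`: the number of click-equivalence classes of acyclic orientations. -/
noncomputable def kappa (G : SimpleGraph V) : ℕ :=
  Nat.card (Quotient (clickSetoid G))

/-- The graph obtained from `G` by contracting the vertex set `I` to the single vertex `vI ∈ I`
(vertices of `I` other than `vI` become isolated). -/
def contractGraph (G : SimpleGraph V) (I : Set V) (vI : V) : SimpleGraph V where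
  Adj a b := a ≠ b ∧
    ((a ∉ I ∧ b ∉ I ∧ G.Adj a b) ∨
     (a = vI ∧ b ∉ I ∧ ∃ x ∈ I, G.Adj x b) ∨
     (b = vI ∧ a ∉ I ∧ ∃ x ∈ I, G.Adj x a))
  symm := by
    constructor
    rintro a b ⟨hne, h⟩
    refine ⟨hne.symm, ?_⟩
    rcases h with ⟨ha, hb, hadj⟩ | ⟨ha, hb, x, hx, hadj⟩ | ⟨hb, ha, x, hx, hadj⟩
    · exact Or.inl ⟨hb, ha, hadj.symm⟩
    · exact Or.inr (Or.inr ⟨ha, hb, x, hx, hadj⟩)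
    · exact Or.inr (Or.inl ⟨hb, ha, x, hx, hadj⟩)
  loopless := by constructor; rintro a ⟨hne, -⟩; exact hne rfl

/-- The orientation of the contracted graph induced by an orientation `O` of `G`. -/
def contractDir {G : SimpleGraph V} (O : AcyclicOrientation G) (I : Set V) (vI : V) :
    V → V → Prop := fun a b =>
  (a ∉ I ∧ b ∉ I ∧ O.dir a b) ∨
  (a = vI ∧ b ∉ I ∧ ∃ x ∈ I, O.dir x b) ∨
  (b = vI ∧ a ∉ I ∧ ∃ x ∈ I, O.dir a x)

/-- The orientation `i → j` iff `i` precedes `j` in the list `l`. -/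
def permDir (G : SimpleGraph V) [DecidableEq V] (l : List V) : V → V → Prop :=
  fun i j => G.Adj i j ∧ l.idxOf i < l.idxOf j
/-- `ν_P` is invariant under source-to-sink conversions. -/
theorem nu_invariant_under_click [Fintype V] (G : SimpleGraph V)
    (O O' : AcyclicOrientation G) (v : V) (h : O.ClickAt v O')
    {u : V} (p : G.Walk u u) : nu O p = nu O' p := by
  classical
  obtain ⟨hsrc, hdir⟩ := h
  set g : V → ℤ := fun a => if a = v then 2 else 0 with hg
  have dart_eq : ∀ {a b : V}, G.Adj a b →
      (if O'.dir a b then (1:ℤ) else -1)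
        = (if O.dir a b then (1:ℤ) else -1) + g b - g a := by
    intro a b hadj
    by_cases hav : a = v
    · have hbv : b ≠ v := hav ▸ hadj.ne'
      have h1 : O.dir a b := by
        rcases O.total hadj with h1 | h1
        · exact h1
        · exact absurd (hav ▸ h1) (hsrc b)
      have h2 : ¬ O'.dir a b := by
        rw [hdir]
        rintro (⟨-, hd⟩ | ⟨hne, -, -⟩)
        · exact hsrc b (hav ▸ hd)
        · exact hne hav
      rw [hav] at h1 h2
      simp [h1, h2, hg, hbv, hav]
    · by_cases hbv : b = v
      · have h1 : ¬ O.dir a b := fun hd => hsrc a (hbv ▸ hd)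
        have hvb : O.dir b a := by
          rcases O.total hadj with h2 | h2
          · exact absurd (hbv ▸ h2) (hsrc a)
          · exact h2
        have h2 : O'.dir a b := by
          rw [hdir]; exact Or.inl ⟨Or.inr hbv, hvb⟩
        rw [hbv] at h1 h2
        simp [h1, h2, hg, hav, hbv]
      · have : O'.dir a b ↔ O.dir a b := by
          rw [hdir]
          constructor
          · rintro (⟨(h1 | h1), -⟩ | ⟨-, -, hd⟩)
            · exact absurd h1 hav
            · exact absurd h1 hbv
            · exact hd
          · intro hd; exact Or.inr ⟨hav, hbv, hd⟩
        rw [this]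
        simp [hg, hav, hbv]
  have key : ∀ {x y : V} (q : G.Walk x y),
      (q.darts.map (fun d => if O'.dir d.toProd.1 d.toProd.2 then (1:ℤ) else -1)).sum
      = (q.darts.map (fun d => if O.dir d.toProd.1 d.toProd.2 then (1:ℤ) else -1)).sum
        + g y - g x := by
    intro x y q
    induction q with
    | nil => simp
    | cons hadj q ih =>
      simp only [SimpleGraph.Walk.darts_cons, List.map_cons, List.sum_cons, ih]
      rw [dart_eq hadj]
      ring
  have := key p
  unfold nu
  omega
end

section
/- Let Γ be a finite simple graph with edge e = {v,w}, and let O^1, O^2 be acyclic orientations of Γ that are click-equivalent and both satisfy v ≤ w in the induced partial order. Then the intervals [v,w] in the posets induced by O^1 and O^2 coincide: a vertex lies on a directed path from v to w in O^1 if and only if it does in O^2, and moreover every directed path from v to w in O^1 is a directed path in O^2 and vice versa. -/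
variable {V : Type*}

open AcyclicOrientation

section IntervalAux

variable {G : SimpleGraph V}

lemma dir_asymm (O : AcyclicOrientation G) {a b : V} (h : O.dir a b) :
    ¬ O.dir b a := fun h' => O.acyclic a (Relation.TransGen.tail (.single h) h')

open Classical in
/-- Signed sum of consecutive pairs of a list. -/
noncomputable def listS (O : AcyclicOrientation G) : List V → ℤ
  | [] => 0
  | [_] => 0
  | a :: b :: t => (if O.dir a b then (1:ℤ) else -1) + listS O (b :: t)

open Classical in
lemma click_term {O O' : AcyclicOrientation G} {u : V} (h : O.ClickAt u O')
    {a b : V} (hab : G.Adj a b) :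
    (if O'.dir a b then (1:ℤ) else -1) - (if O.dir a b then 1 else -1)
      = 2 * ((if b = u then (1:ℤ) else 0) - (if a = u then 1 else 0)) := by
  obtain ⟨hsrc, hiff⟩ := h
  by_cases hb : b = u
  · subst hb
    have hne : a ≠ b := hab.ne
    have h1 : ¬ O.dir a b := hsrc a
    have h2 : O.dir b a := (O.total hab).resolve_left h1
    have h3 : O'.dir a b := (hiff a b).2 (Or.inl ⟨Or.inr rfl, h2⟩)
    simp [h1, h3, hne]
  · by_cases ha : a = u
    · subst ha
      have h1 : ¬ O.dir b a := hsrc b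
      have h2 : O.dir a b := (O.total hab).resolve_right h1
      have h3 : ¬ O'.dir a b := by
        rw [hiff]
        rintro (⟨-, hd⟩ | ⟨hd, -⟩)
        · exact h1 hd
        · exact hd rfl
      simp [h2, h3, hb]
    · have h3 : O'.dir a b ↔ O.dir a b := by
        rw [hiff]
        constructor
        · rintro (⟨h4 | h4, -⟩ | ⟨-, -, hd⟩)
          · exact absurd h4 ha
          · exact absurd h4 hb
          · exact hd
        · exact fun hd => Or.inr ⟨ha, hb, hd⟩
      simp only [h3, ha, hb, if_neg]
      ring

open Classical in
lemma click_listS {O O' : AcyclicOrientation G} {u : V} (h : O.ClickAt u O') :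
    ∀ (l : List V) (a : V), List.Chain G.Adj a l →
    listS O' (a :: l) - listS O (a :: l)
      = 2 * ((if (a::l).getLast (by simp) = u then (1:ℤ) else 0)
            - (if a = u then 1 else 0))
  | [], a, _ => by
    show (0:ℤ) - 0 = 2 * ((if a = u then (1:ℤ) else 0) - (if a = u then 1 else 0)); simp
  | b :: t, a, hc => by
    replace hc := List.isChain_cons_cons.mp hc
    have ih := click_listS h t b hc.2
    have hterm := click_term h hc.1
    show listS O' (a :: b :: t) - listS O (a :: b :: t) = 2 * ((if (b :: t).getLast (by simp) = u then (1:ℤ) else 0) - (if a = u then 1 else 0))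
    simp only [listS, List.getLast_cons_cons] at *
    linarith


lemma clickEquiv_listS {O O' : AcyclicOrientation G} (h : ClickEquiv O O')
    {a : V} {l : List V} (hc : List.Chain G.Adj a l)
    (hcl : (a::l).getLast (by simp) = a) :
    listS O (a::l) = listS O' (a::l) := by
  induction h with
  | refl => rfl
  | tail hOO' hclick ih =>
    obtain ⟨u, hu⟩ := hclick
    have hd := click_listS hu l a hc
    rw [hcl] at hd
    simp only [sub_self, mul_zero] at hd
    omega

open Classical in
lemma listS_concat (O : AcyclicOrientation G) :
    ∀ (l : List V) (a b : V), listS O (a :: (l ++ [b]))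
      = listS O (a :: l) + (if O.dir ((a::l).getLast (by simp)) b then 1 else -1)
  | [], a, b => by
    show (if O.dir a b then (1:ℤ) else -1) + 0 = 0 + (if O.dir a b then 1 else -1); ring
  | c :: t, a, b => by
    have ih := listS_concat O t c b
    simp only [List.cons_append, listS, List.append_eq, List.getLast_cons_cons, ih]
    exact (add_assoc _ _ _).symm

lemma listS_of_chain (O : AcyclicOrientation G) :
    ∀ (l : List V) (a : V), List.Chain O.dir a l → listS O (a :: l) = l.length
  | [], a, _ => by simp [listS]
  | b :: t, a, hc => by
    replace hc := List.isChain_cons_cons.mp hc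
    have ih := listS_of_chain O t b hc.2
    simp only [listS, if_pos hc.1, ih, List.length_cons]
    push_cast
    ring

open Classical in
lemma listS_le (O : AcyclicOrientation G) :
    ∀ (l : List V) (a : V), listS O (a :: l) ≤ l.length
  | [], a => by simp [listS]
  | b :: t, a => by
    have ih := listS_le O t b
    simp only [listS, List.length_cons]
    have : (if O.dir a b then (1:ℤ) else -1) ≤ 1 := by split <;> omega
    push_cast
    omega

open Classical in
lemma chain_of_listS (O : AcyclicOrientation G) :
    ∀ (l : List V) (a : V), listS O (a :: l) = l.length → List.Chain O.dir a l
  | [], a, _ => List.Chain.nil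
  | b :: t, a, hS => by
    have hle := listS_le O t b
    simp only [listS, List.length_cons] at hS
    have hterm : (if O.dir a b then (1:ℤ) else -1) ≤ 1 := by split <;> omega
    have h1 : (if O.dir a b then (1:ℤ) else -1) = 1 := by push_cast at hS; omega
    have h2 : listS O (b :: t) = t.length := by push_cast at hS ⊢; omega
    have hd : O.dir a b := by by_contra hn; simp [hn] at h1
    exact List.Chain.cons hd (chain_of_listS O t b h2)

lemma chain_snoc {r : V → V → Prop} :
    ∀ (l : List V) (a b : V), List.Chain r a l →
      r ((a::l).getLast (by simp)) b → List.Chain r a (l ++ [b])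
  | [], a, b, _, hr => by
    simp only [List.getLast_singleton] at hr
    exact List.Chain.cons hr List.Chain.nil
  | c :: t, a, b, hc, hr => by
    replace hc := List.isChain_cons_cons.mp hc
    rw [List.getLast_cons_cons] at hr
    exact List.Chain.cons hc.1 (chain_snoc t c b hc.2 hr)

lemma chain_append_trans {r : V → V → Prop} :
    ∀ (l₁ : List V) (a : V) (l₂ : List V), List.Chain r a l₁ →
      List.Chain r ((a::l₁).getLast (by simp)) l₂ → List.Chain r a (l₁ ++ l₂)
  | [], a, l₂, _, h₂ => by simpa using h₂
  | c :: t, a, l₂, hc, h₂ => by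
    replace hc := List.isChain_cons_cons.mp hc
    rw [List.getLast_cons_cons] at h₂
    exact List.Chain.cons hc.1 (chain_append_trans t c l₂ hc.2 h₂)

lemma getLast_append_eq :
    ∀ (l₁ : List V) (x a : V) (l₂ : List V), (x :: l₁).getLast (by simp) = a →
      (x :: (l₁ ++ l₂)).getLast (by simp) = (a :: l₂).getLast (by simp)
  | [], x, a, l₂, h => by
    simp only [List.getLast_singleton] at h
    subst h; rfl
  | c :: t, x, a, l₂, h => by
    rw [List.getLast_cons_cons] at h
    simpa only [List.cons_append, List.getLast_cons_cons] using
      getLast_append_eq t c a l₂ h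

lemma chain_prefix_split {r : V → V → Prop} :
    ∀ (l₁ : List V) (a : V) (l₂ : List V), List.Chain r a (l₁ ++ l₂) →
      List.Chain r a l₁ ∧ List.Chain r ((a::l₁).getLast (by simp)) l₂
  | [], a, l₂, h => ⟨List.Chain.nil, by simpa using h⟩
  | c :: t, a, l₂, h => by
    rw [List.cons_append] at h; replace h := List.isChain_cons_cons.mp h
    obtain ⟨h1, h2⟩ := chain_prefix_split t c l₂ h.2
    exact ⟨List.Chain.cons h.1 h1, by rwa [List.getLast_cons_cons]⟩

open Classical in
lemma chain_transfer {O₁ O₂ : AcyclicOrientation G}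
    (hS : ∀ (a : V) (l : List V), List.Chain G.Adj a l →
      (a::l).getLast (by simp) = a → listS O₁ (a::l) = listS O₂ (a::l))
    {v w : V} (hvw : G.Adj v w) (h1 : O₁.dir v w) (h2 : O₂.dir v w)
    {l : List V} (hl : List.Chain O₁.dir v l)
    (hlast : (v::l).getLast (by simp) = w) :
    List.Chain O₂.dir v l := by
  have hadj : List.Chain G.Adj v l := List.IsChain.imp (fun _ _ hd => O₁.dir_adj hd) hl
  have hadj' : List.Chain G.Adj v (l ++ [v]) :=
    chain_snoc l v v hadj (by rw [hlast]; exact hvw.symm)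
  have hclosed : (v :: (l ++ [v])).getLast (by simp) = v :=
    (getLast_append_eq l v w [v] hlast).trans (by simp)
  have hinv := hS v (l ++ [v]) hadj' hclosed
  have hc1 := listS_concat O₁ l v v
  have hc2 := listS_concat O₂ l v v
  rw [hlast] at hc1 hc2
  rw [if_neg (dir_asymm O₁ h1)] at hc1
  rw [if_neg (dir_asymm O₂ h2)] at hc2
  have hS1 : listS O₁ (v :: l) = l.length := listS_of_chain O₁ l v hl
  have hS2 : listS O₂ (v :: l) = l.length := by omega
  exact chain_of_listS O₂ l v hS2

end IntervalAux

/-- For click-equivalent orientations both orienting the edge `{v,w}` as `(v,w)`, the intervals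
`[v,w]` coincide, and the directed `v`–`w` paths agree. -/
theorem interval_well_defined [Fintype V] (G : SimpleGraph V) (v w : V) (hvw : G.Adj v w)
    (O₁ O₂ : AcyclicOrientation G) (h : ClickEquiv O₁ O₂)
    (h1 : O₁.dir v w) (h2 : O₂.dir v w) :
    interval O₁ v w = interval O₂ v w ∧
      ∀ l : List V, l.head? = some v → l.getLast? = some w →
        (List.Chain' O₁.dir l ↔ List.Chain' O₂.dir l) := by
  have hS : ∀ (a : V) (l : List V), List.Chain G.Adj a l →
      (a::l).getLast (by simp) = a → listS O₁ (a::l) = listS O₂ (a::l) :=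
    fun a l hc hcl => clickEquiv_listS h hc hcl
  have key : ∀ (l : List V), List.Chain O₁.dir v l →
      (v::l).getLast (by simp) = w → List.Chain O₂.dir v l :=
    fun l hl hlast => chain_transfer hS hvw h1 h2 hl hlast
  have key' : ∀ (l : List V), List.Chain O₂.dir v l →
      (v::l).getLast (by simp) = w → List.Chain O₁.dir v l :=
    fun l hl hlast =>
      chain_transfer (fun a l hc hcl => (hS a l hc hcl).symm) hvw h2 h1 hl hlast
  constructor
  · ext a
    simp only [interval, Set.mem_setOf_eq]
    constructor
    · rintro ⟨hva, haw⟩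
      obtain ⟨l₁, hc1, hl1⟩ := List.exists_isChain_cons_of_relationReflTransGen hva
      obtain ⟨l₂, hc2, hl2⟩ := List.exists_isChain_cons_of_relationReflTransGen haw
      have hchain : List.Chain O₁.dir v (l₁ ++ l₂) :=
        chain_append_trans l₁ v l₂ hc1 (by rw [hl1]; exact hc2)
      have hlast : (v :: (l₁ ++ l₂)).getLast (by simp) = w :=
        (getLast_append_eq l₁ v a l₂ hl1).trans hl2
      have h2chain := key _ hchain hlast
      obtain ⟨hp, hq⟩ := chain_prefix_split l₁ v l₂ h2chain
      rw [hl1] at hq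
      exact ⟨List.relationReflTransGen_of_exists_isChain_cons l₁ hp hl1,
        List.relationReflTransGen_of_exists_isChain_cons l₂ hq hl2⟩
    · rintro ⟨hva, haw⟩
      obtain ⟨l₁, hc1, hl1⟩ := List.exists_isChain_cons_of_relationReflTransGen hva
      obtain ⟨l₂, hc2, hl2⟩ := List.exists_isChain_cons_of_relationReflTransGen haw
      have hchain : List.Chain O₂.dir v (l₁ ++ l₂) :=
        chain_append_trans l₁ v l₂ hc1 (by rw [hl1]; exact hc2)
      have hlast : (v :: (l₁ ++ l₂)).getLast (by simp) = w :=
        (getLast_append_eq l₁ v a l₂ hl1).trans hl2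
      have h1chain := key' _ hchain hlast
      obtain ⟨hp, hq⟩ := chain_prefix_split l₁ v l₂ h1chain
      rw [hl1] at hq
      exact ⟨List.relationReflTransGen_of_exists_isChain_cons l₁ hp hl1,
        List.relationReflTransGen_of_exists_isChain_cons l₂ hq hl2⟩
  · rintro (_ | ⟨v', t⟩) hhead hlastq
    · simp at hhead
    · simp only [List.head?_cons, Option.some.injEq] at hhead
      subst hhead
      have hlast : (v' :: t).getLast (by simp) = w := by
        rw [List.getLast?_eq_getLast (l := v' :: t) (by simp)] at hlastq
        exact Option.some.inj hlastq
      show List.Chain O₁.dir v' t ↔ List.Chain O₂.dir v' t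
      exact ⟨fun hc => key t hc hlast, fun hc => key' t hc hlast⟩
end

section
/- Let O be an acyclic orientation of a finite simple graph Γ, let c = c_1 c_2 ⋯ c_m be a click-sequence applicable to O (each c_i is a source of the orientation obtained after applying c_1,...,c_{i-1}), and let (v_1, v_2) be a directed edge of O. Then in the sequence c, the occurrences of v_1 and v_2 alternate, with v_1 appearing first (if either appears at all). -/
variable {V : Type*}

open AcyclicOrientation

lemma alt_aux [DecidableEq V] {G : SimpleGraph V} :
    ∀ (c : List V) (v₁ v₂ : V) (O O₂ : AcyclicOrientation G),
    ClickSeq O c O₂ → O.dir v₁ v₂ →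
    ∀ (i : ℕ) (hi : i < (c.filter (fun z => decide (z = v₁ ∨ z = v₂))).length),
      (c.filter (fun z => decide (z = v₁ ∨ z = v₂))).get ⟨i, hi⟩ =
        if i % 2 = 0 then v₁ else v₂ := by
  intro c
  induction c with
  | nil =>
    intro v₁ v₂ O O₂ h hd i hi
    simp at hi
  | cons v c' ih =>
    intro v₁ v₂ O O₂ h hd i hi
    cases h with
    | @cons _ O' _ _ _ hclick hrest =>
      have hnv2 : v ≠ v₂ := by
        intro e; subst e; exact hclick.1 v₁ hd
      by_cases hv1 : v = v₁
      · subst hv1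
        have hd' : O'.dir v₂ v := by
          rw [(hclick.2 v₂ v)]
          exact Or.inl ⟨Or.inr rfl, hd⟩
        have hP : (fun z => decide (z = v₂ ∨ z = v)) = (fun z => decide (z = v ∨ z = v₂)) := by
          funext z; simp [or_comm]
        have htail := ih v₂ v O' O₂ hrest hd'
        rw [hP] at htail
        have hfilt : (v :: c').filter (fun z => decide (z = v ∨ z = v₂)) =
            v :: c'.filter (fun z => decide (z = v ∨ z = v₂)) := by
          simp
        revert hi
        rw [hfilt]
        intro hi
        match i with
        | 0 => simp
        | j + 1 =>
          have := htail j (by simpa using hi)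
          simp only [List.get_cons_succ]
          rw [this]
          rcases Nat.even_or_odd j with he | ho
          · have h1 : j % 2 = 0 := Nat.even_iff.mp he
            have h2 : (j + 1) % 2 = 1 := by omega
            simp [h1, h2]
          · have h1 : j % 2 = 1 := Nat.odd_iff.mp ho
            have h2 : (j + 1) % 2 = 0 := by omega
            simp [h1, h2]
      · have hd' : O'.dir v₁ v₂ := by
          rw [(hclick.2 v₁ v₂)]
          exact Or.inr ⟨fun e => hv1 e.symm, fun e => hnv2 e.symm, hd⟩
        have hfilt : (v :: c').filter (fun z => decide (z = v₁ ∨ z = v₂)) =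
            c'.filter (fun z => decide (z = v₁ ∨ z = v₂)) := by
          simp [hv1, hnv2]
        revert hi
        rw [hfilt]
        intro hi
        exact ih v₁ v₂ O' O₂ hrest hd' i hi

/-- In a click-sequence, the occurrences of the endpoints of a directed edge `(v₁, v₂)` of `O`
alternate, with `v₁` first. -/
theorem click_sequence_alternates [Fintype V] [DecidableEq V] (G : SimpleGraph V)
    (O O₂ : AcyclicOrientation G) (c : List V) (h : ClickSeq O c O₂)
    (v₁ v₂ : V) (hd : O.dir v₁ v₂) :
    ∀ (i : ℕ) (hi : i < (c.filter (fun z => decide (z = v₁ ∨ z = v₂))).length),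
      (c.filter (fun z => decide (z = v₁ ∨ z = v₂))).get ⟨i, hi⟩ =
        if i % 2 = 0 then v₁ else v₂ := by
  exact alt_aux c v₁ v₂ O O₂ h hd
end

section
/- Let Γ be a finite simple graph with edge {v,w}, O an acyclic orientation with v ≤_O w, and c = c_1⋯c_m a click-sequence starting with c_1 = v that contains every vertex of the interval I(O) = [v,w] at least once. Then every vertex of I(O) appears in c before any vertex of I(O) appears a second time. -/
variable {V : Type*}

open AcyclicOrientation

section Aux

variable {G : SimpleGraph V} [DecidableEq V]

/-- A prefix of a click-sequence is a click-sequence. -/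
lemma ClickSeq.take_exists {O O₂ : AcyclicOrientation G} {c : List V}
    (h : ClickSeq O c O₂) : ∀ n : ℕ, ∃ O', ClickSeq O (c.take n) O' := by
  induction h with
  | nil O => intro n; exact ⟨O, by simpa using ClickSeq.nil O⟩
  | @cons O O' O'' u c' hclick hseq ih =>
    intro n
    cases n with
    | zero => exact ⟨O, ClickSeq.nil O⟩
    | succ m =>
      obtain ⟨Om, hm⟩ := ih m
      exact ⟨Om, by simpa using ClickSeq.cons hclick hm⟩

/-- Along a directed edge `a → b` of `O`, the click counts of `a` and `b` in any click-sequence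
from `O` satisfy `count b ≤ count a ≤ count b + 1`. -/
lemma count_edge {O O₂ : AcyclicOrientation G} {c : List V}
    (h : ClickSeq O c O₂) : ∀ a b : V, O.dir a b →
      c.count b ≤ c.count a ∧ c.count a ≤ c.count b + 1 := by
  induction h with
  | nil O => intro a b _; simp
  | @cons O O' O'' u c' hclick hseq ih =>
    intro a b hab
    obtain ⟨hsrc, hdir⟩ := hclick
    have hne : a ≠ b := (O.dir_adj hab).ne
    by_cases hua : u = a
    · have hba' : O'.dir b a := (hdir b a).2 (Or.inl ⟨Or.inr hua.symm, hab⟩)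
      obtain ⟨h1, h2⟩ := ih b a hba'
      have ea : (u == a) = true := by simp [hua]
      have eb : (u == b) = false := by rw [hua]; simp [hne]
      simp [List.count_cons, ea, eb]
      omega
    · by_cases hub : u = b
      · exact absurd hab (hub ▸ hsrc a)
      · have hab' : O'.dir a b :=
          (hdir a b).2 (Or.inr ⟨fun h' => hua h'.symm, fun h' => hub h'.symm, hab⟩)
        obtain ⟨h1, h2⟩ := ih a b hab'
        have ea : (u == a) = false := by simp [hua]
        have eb : (u == b) = false := by simp [hub]
        simp [List.count_cons, ea, eb]
        omega

/-- Along a directed path, counts are non-increasing. -/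
lemma count_path {O O₂ : AcyclicOrientation G} {c : List V}
    (h : ClickSeq O c O₂) {a b : V} (hab : Relation.ReflTransGen O.dir a b) :
    c.count b ≤ c.count a := by
  induction hab with
  | refl => exact le_rfl
  | tail _ hmb ih => exact le_trans (count_edge h _ _ hmb).1 ih

end Aux

/-- If a click-sequence starts at `v` and contains every vertex of the `vw`-interval, then every
vertex of the interval appears before any vertex of the interval appears a second time. -/
theorem interval_vertices_before_repeats [Fintype V] (G : SimpleGraph V) (v w : V)
    (hvw : G.Adj v w) (O O₂ : AcyclicOrientation G) (hd : O.dir v w)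
    (c : List V) (h : ClickSeq O c O₂)
    (hhead : c.head? = some v)
    (hall : ∀ z ∈ interval O v w, z ∈ c) :
    ∀ j : Fin c.length, c.get j ∈ interval O v w →
      (∃ i : Fin c.length, i < j ∧ c.get i = c.get j) →
      ∀ z ∈ interval O v w, ∃ k : Fin c.length, k < j ∧ c.get k = z := by
  classical
  intro j hj hrep z hz
  obtain ⟨i, hij, hival⟩ := hrep
  set x := c.get j with hx
  obtain ⟨hvx, hxw⟩ := hj
  obtain ⟨hvz, hzw⟩ := hz
  set p := c.take (j.val + 1) with hp
  obtain ⟨O', hseq⟩ := ClickSeq.take_exists h (j.val + 1)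
  rw [← hp] at hseq
  -- x occurs at least twice in p
  have hpeq : p = c.take j.val ++ [x] := by
    rw [hp, List.take_succ]
    congr 1
    rw [List.getElem?_eq_getElem j.isLt]
    simp [hx, List.get_eq_getElem]
  have hxmem : x ∈ c.take j.val := by
    have hi : i.val < j.val := hij
    have : (c.take j.val)[i.val]'(by simp [hi, i.isLt]) = x := by
      rw [List.getElem_take]
      rw [← hival]; simp [List.get_eq_getElem]
    exact this ▸ List.getElem_mem _
  have hcx : 2 ≤ p.count x := by
    have h1 : 1 ≤ (c.take j.val).count x := List.one_le_count_iff.2 hxmem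
    have h2 : p.count x = (c.take j.val).count x + 1 := by rw [hpeq]; simp
    omega
  -- propagate counts along directed paths
  have hcv : 2 ≤ p.count v := le_trans hcx (count_path hseq hvx)
  have hcw : 1 ≤ p.count w := by
    have := (count_edge hseq v w hd).2
    omega
  have hcz : 1 ≤ p.count z := le_trans hcw (count_path hseq hzw)
  have hzmem : z ∈ p := List.one_le_count_iff.1 hcz
  obtain ⟨k, hk, hkz⟩ := List.mem_iff_getElem.1 hzmem
  have hk' : k < min (j.val + 1) c.length := by simpa [hp] using hk
  have hklen : k < c.length := lt_of_lt_of_le hk' (min_le_right _ _)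
  have hkle : k ≤ j.val := by have := lt_min_iff.mp hk'; omega
  have hkval : c.get ⟨k, hklen⟩ = z := by
    rw [← hkz]
    simp only [List.get_eq_getElem]
    exact (List.getElem_take).symm
  rcases lt_or_eq_of_le hkle with hklt | hkeq
  · exact ⟨⟨k, hklen⟩, by simpa [Fin.lt_def] using hklt, hkval⟩
  · have hzx : z = x := by
      have hfin : (⟨k, hklen⟩ : Fin c.length) = j := Fin.ext hkeq
      rw [← hkval, hfin]
    exact ⟨i, hij, by rw [hival]; exact hzx.symm⟩
end

section
/- Let Γ be a finite simple graph that is the union of two subgraphs Γ_1 and Γ_2 joined by a bridge e. Then κ(Γ) = κ(Γ_1)·κ(Γ_2), where κ denotes the number of click-equivalence classes of acyclic orientations. -/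
variable {V : Type*}

open AcyclicOrientation

namespace AcyclicOrientation

variable {G : SimpleGraph V}

theorem ext' {O O' : AcyclicOrientation G} (h : ∀ a b, O.dir a b ↔ O'.dir a b) : O = O' := by
  obtain ⟨d, da, t, ac⟩ := O
  obtain ⟨d', da', t', ac'⟩ := O'
  have hd : d = d' := funext fun a => funext fun b => propext (h a b)
  subst hd
  rfl

theorem dir_asymm (O : AcyclicOrientation G) {a b : V} (h : O.dir a b) : ¬ O.dir b a :=
  fun h' => O.acyclic a ((Relation.TransGen.single h).tail h')

theorem dir_irrefl (O : AcyclicOrientation G) : ∀ a : V, ¬ O.dir a a :=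
  fun a h => O.acyclic a (Relation.TransGen.single h)

/-- The result of clicking a source `v`. -/
def clickOrientation (O : AcyclicOrientation G) (v : V) (hv : O.IsSource v) :
    AcyclicOrientation G where
  dir a b := ((a = v ∨ b = v) ∧ O.dir b a) ∨ (a ≠ v ∧ b ≠ v ∧ O.dir a b)
  dir_adj := by
    rintro a b (⟨_, h⟩ | ⟨_, _, h⟩)
    · exact (O.dir_adj h).symm
    · exact O.dir_adj h
  total := by
    intro a b hab
    by_cases ha : a = v
    · subst ha
      have hd : O.dir a b := (O.total hab).resolve_right (hv b)
      exact Or.inr (Or.inl ⟨Or.inr rfl, hd⟩)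
    · by_cases hb : b = v
      · subst hb
        have hd : O.dir b a := (O.total hab.symm).resolve_right (hv a)
        exact Or.inl (Or.inl ⟨Or.inr rfl, hd⟩)
      · rcases O.total hab with h | h
        · exact Or.inl (Or.inr ⟨ha, hb, h⟩)
        · exact Or.inr (Or.inr ⟨hb, ha, h⟩)
  acyclic := by
    intro z h
    set d' : V → V → Prop :=
      fun a b => ((a = v ∨ b = v) ∧ O.dir b a) ∨ (a ≠ v ∧ b ≠ v ∧ O.dir a b) with hd'
    have hnov : ∀ b, ¬ d' v b := by
      rintro b (⟨_, h⟩ | ⟨hne, _, _⟩)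
      · exact hv b h
      · exact hne rfl
    have claim1 : ∀ a c, Relation.TransGen d' a c → a = v → False := by
      intro a c h
      induction h with
      | single h => rintro rfl; exact hnov _ h
      | tail _ _ ih => intro hav; exact ih hav
    have claim2 : ∀ a c, Relation.TransGen d' a c → a ≠ v → c = v ∨ Relation.TransGen O.dir a c := by
      intro a c h
      induction h with
      | single h =>
          intro hav
          rcases h with ⟨hor, hd⟩ | ⟨_, _, hd⟩
          · rcases hor with rfl | rfl
            · exact absurd rfl hav
            · exact Or.inl rfl
          · exact Or.inr (Relation.TransGen.single hd)
      | tail hab hbc ih =>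
          intro hav
          rcases ih hav with rfl | htg
          · exact absurd hbc (hnov _)
          · rcases hbc with ⟨hor, hd⟩ | ⟨_, _, hd⟩
            · rcases hor with rfl | rfl
              · exact absurd (Or.inl ⟨Or.inl rfl, hd⟩) (hnov _)
              · exact Or.inl rfl
            · exact Or.inr (htg.tail hd)
    by_cases hz : z = v
    · exact claim1 z z h hz
    · rcases claim2 z z h hz with rfl | htg
      · exact hz rfl
      · exact O.acyclic z htg

theorem clickAt_clickOrientation (O : AcyclicOrientation G) (v : V) (hv : O.IsSource v) :
    O.ClickAt v (O.clickOrientation v hv) :=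
  ⟨hv, fun _ _ => Iff.rfl⟩

end AcyclicOrientation

theorem rtg_eqvGen {α : Type*} {r : α → α → Prop} {a b : α} (h : Relation.ReflTransGen r a b) :
    Relation.EqvGen r a b := by
  induction h with
  | refl => exact Relation.EqvGen.refl a
  | tail _ h ih => exact Relation.EqvGen.trans _ _ _ ih (Relation.EqvGen.rel _ _ h)
/-- Clicking every vertex of a set `T` (no edge enters `T` from outside) once, in topological
order, reverses exactly the edges between `T` and its complement. -/
theorem flipSet {V : Type*} [Finite V] [DecidableEq V] {G : SimpleGraph V} :
    ∀ (n : ℕ) (T : Finset V) (O : AcyclicOrientation G), T.card = n →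
      (∀ a ∈ T, ∀ b ∉ T, ¬ O.dir b a) →
      ∃ O' : AcyclicOrientation G, Relation.ReflTransGen IsClick O O' ∧
        ∀ a b, O'.dir a b ↔
          (((a ∈ T ↔ b ∈ T) ∧ O.dir a b) ∨ (¬(a ∈ T ↔ b ∈ T) ∧ O.dir b a)) := by
  intro n
  induction n with
  | zero =>
      intro T O hc _
      refine ⟨O, .refl, ?_⟩
      have hT : T = ∅ := Finset.card_eq_zero.mp hc
      subst hT
      intro a b
      simp
  | succ n ih =>
      intro T O hc hcross
      haveI : IsTrans V (Relation.TransGen O.dir) := ⟨fun _ _ _ => Relation.TransGen.trans⟩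
      haveI : IsIrrefl V (Relation.TransGen O.dir) := ⟨O.acyclic⟩
      have wf := Finite.wellFounded_of_trans_of_irrefl (Relation.TransGen O.dir)
      have hTne : ((T : Set V)).Nonempty := by
        rw [Finset.coe_nonempty]
        exact Finset.card_pos.mp (by omega)
      obtain ⟨v, hvT, hmin⟩ := wf.has_min T hTne
      have hvT : v ∈ T := hvT
      have hsrc : O.IsSource v := by
        intro a ha
        by_cases haT : a ∈ T
        · exact hmin a haT (Relation.TransGen.single ha)
        · exact hcross v hvT a haT ha
      set O₂ := O.clickOrientation v hsrc with hO₂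
      have hdir₂ : ∀ a b, O₂.dir a b ↔
          (((a = v ∨ b = v) ∧ O.dir b a) ∨ (a ≠ v ∧ b ≠ v ∧ O.dir a b)) := fun _ _ => Iff.rfl
      have hcard : (T.erase v).card = n := by
        rw [Finset.card_erase_of_mem hvT, hc]
        omega
      have hcross₂ : ∀ a ∈ T.erase v, ∀ b ∉ T.erase v, ¬ O₂.dir b a := by
        intro a ha b hb hd
        obtain ⟨hav, haT⟩ := Finset.mem_erase.mp ha
        rcases (hdir₂ b a).mp hd with ⟨hbv, hOd⟩ | ⟨hbv, _, hOd⟩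
        · rcases hbv with rfl | rfl
          · exact hsrc a hOd
          · exact hav rfl
        · have hbT : b ∉ T := fun hbT => hb (Finset.mem_erase.mpr ⟨hbv, hbT⟩)
          exact hcross a haT b hbT hOd
      obtain ⟨O', hstep, hdir'⟩ := ih (T.erase v) O₂ hcard hcross₂
      refine ⟨O', Relation.ReflTransGen.head ⟨v, O.clickAt_clickOrientation v hsrc⟩ hstep, ?_⟩
      intro a b
      rw [hdir' a b, hdir₂, hdir₂]
      have h1 := O.dir_irrefl
      have h2 := fun a => hsrc a
      have h3 := fun (c : V) (h : O.dir v c) (h' : O.dir c v) => O.dir_asymm h h'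
      by_cases ha : a = v <;> by_cases hb : b = v <;>
        simp_all [Finset.mem_erase]
/-- The orientation on the sum type obtained by gluing `O₁`, `O₂` with bridge `x → y`. -/
def glueDir {V₁ V₂ : Type*} {G₁ : SimpleGraph V₁} {G₂ : SimpleGraph V₂}
    (x : V₁) (y : V₂) (O₁ : AcyclicOrientation G₁) (O₂ : AcyclicOrientation G₂) :
    V₁ ⊕ V₂ → V₁ ⊕ V₂ → Prop
  | Sum.inl a, Sum.inl b => O₁.dir a b
  | Sum.inr a, Sum.inr b => O₂.dir a b
  | Sum.inl a, Sum.inr b => a = x ∧ b = y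
  | Sum.inr _, Sum.inl _ => False

section Bridge

variable {V₁ V₂ : Type*} {G₁ : SimpleGraph V₁} {G₂ : SimpleGraph V₂} {x : V₁} {y : V₂}
  {G : SimpleGraph (V₁ ⊕ V₂)}
  (h11 : ∀ a b, G.Adj (Sum.inl a) (Sum.inl b) ↔ G₁.Adj a b)
  (h22 : ∀ a b, G.Adj (Sum.inr a) (Sum.inr b) ↔ G₂.Adj a b)
  (h12 : ∀ a b, G.Adj (Sum.inl a) (Sum.inr b) ↔ (a = x ∧ b = y))

def restrict₁ (O : AcyclicOrientation G) : AcyclicOrientation G₁ where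
  dir a b := O.dir (Sum.inl a) (Sum.inl b)
  dir_adj h := (h11 _ _).mp (O.dir_adj h)
  total h := O.total ((h11 _ _).mpr h)
  acyclic a h := O.acyclic (Sum.inl a) (Relation.TransGen.lift (p := O.dir) Sum.inl (fun _ _ hd => hd) a a h)

def restrict₂ (O : AcyclicOrientation G) : AcyclicOrientation G₂ where
  dir a b := O.dir (Sum.inr a) (Sum.inr b)
  dir_adj h := (h22 _ _).mp (O.dir_adj h)
  total h := O.total ((h22 _ _).mpr h)
  acyclic a h := O.acyclic (Sum.inr a) (Relation.TransGen.lift (p := O.dir) Sum.inr (fun _ _ hd => hd) a a h)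

def glue (O₁ : AcyclicOrientation G₁) (O₂ : AcyclicOrientation G₂) :
    AcyclicOrientation G where
  dir := glueDir x y O₁ O₂
  dir_adj {a b} h := by
    cases a with
    | inl a =>
      cases b with
      | inl b => exact (h11 a b).mpr (O₁.dir_adj h)
      | inr b => exact (h12 a b).mpr h
    | inr a =>
      cases b with
      | inl b => exact h.elim
      | inr b => exact (h22 a b).mpr (O₂.dir_adj h)
  total {a b} h := by
    cases a with
    | inl a =>
      cases b with
      | inl b => exact O₁.total ((h11 a b).mp h)
      | inr b => exact Or.inl ((h12 a b).mp h)
    | inr a =>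
      cases b with
      | inl b => exact Or.inr ((h12 b a).mp h.symm)
      | inr b => exact O₂.total ((h22 a b).mp h)
  acyclic := by
    intro z h
    have noRL : ∀ (a : V₂) (c : V₁ ⊕ V₂), Relation.TransGen (glueDir x y O₁ O₂) (Sum.inr a) c →
        ∀ b : V₁, c = Sum.inl b → False := by
      intro a c h
      induction h with
      | @single c h => rintro b rfl; exact h
      | @tail c' c h₁ h₂ ih =>
        rintro b rfl
        cases c' with
        | inl c₀ => exact ih c₀ rfl
        | inr c₀ => exact h₂
    have hLL : ∀ (a : V₁) (c : V₁ ⊕ V₂), Relation.TransGen (glueDir x y O₁ O₂) (Sum.inl a) c →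
        ∀ b : V₁, c = Sum.inl b → Relation.TransGen O₁.dir a b := by
      intro a c h
      induction h with
      | @single c h => rintro b rfl; exact Relation.TransGen.single h
      | @tail c' c h₁ h₂ ih =>
        rintro b rfl
        cases c' with
        | inl c₀ => exact (ih c₀ rfl).tail h₂
        | inr c₀ => exact h₂.elim
    have hRR : ∀ (a : V₂) (c : V₁ ⊕ V₂), Relation.TransGen (glueDir x y O₁ O₂) (Sum.inr a) c →
        ∀ b : V₂, c = Sum.inr b → Relation.TransGen O₂.dir a b := by
      intro a c h
      induction h with
      | @single c h => rintro b rfl; exact Relation.TransGen.single h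
      | @tail c' c h₁ h₂ ih =>
        rintro b rfl
        cases c' with
        | inl c₀ => exact (noRL a _ h₁ c₀ rfl).elim
        | inr c₀ => exact (ih c₀ rfl).tail h₂
    cases z with
    | inl a => exact O₁.acyclic a (hLL a _ h a rfl)
    | inr a => exact O₂.acyclic a (hRR a _ h a rfl)

include h12 in
theorem cross_dirlr {O : AcyclicOrientation G} (hbr : O.dir (Sum.inl x) (Sum.inr y)) :
    (∀ a b, O.dir (Sum.inl a) (Sum.inr b) ↔ (a = x ∧ b = y)) ∧
      ∀ a b, ¬ O.dir (Sum.inr b) (Sum.inl a) := by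
  constructor
  · intro a b
    constructor
    · intro h; exact (h12 a b).mp (O.dir_adj h)
    · rintro ⟨rfl, rfl⟩; exact hbr
  · intro a b h
    obtain ⟨rfl, rfl⟩ := (h12 a b).mp (O.dir_adj h).symm
    exact O.dir_asymm hbr h

include h12 in
theorem cross_dirrl {O : AcyclicOrientation G} (hbr : O.dir (Sum.inr y) (Sum.inl x)) :
    (∀ a b, O.dir (Sum.inr b) (Sum.inl a) ↔ (a = x ∧ b = y)) ∧
      ∀ a b, ¬ O.dir (Sum.inl a) (Sum.inr b) := by
  constructor
  · intro a b
    constructor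
    · intro h; exact (h12 a b).mp (O.dir_adj h).symm
    · rintro ⟨rfl, rfl⟩; exact hbr
  · intro a b h
    obtain ⟨rfl, rfl⟩ := (h12 a b).mp (O.dir_adj h)
    exact O.dir_asymm hbr h

include h12 in
/-- Flip the bridge `y → x` to `x → y` by clicking every vertex of the right side. -/
theorem flipRight [Fintype V₁] [Fintype V₂] (O : AcyclicOrientation G)
    (hbr : O.dir (Sum.inr y) (Sum.inl x)) :
    ∃ O' : AcyclicOrientation G, Relation.ReflTransGen IsClick O O' ∧
      (∀ a b, O'.dir (Sum.inl a) (Sum.inl b) ↔ O.dir (Sum.inl a) (Sum.inl b)) ∧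
      (∀ a b, O'.dir (Sum.inr a) (Sum.inr b) ↔ O.dir (Sum.inr a) (Sum.inr b)) ∧
      (∀ a b, O'.dir (Sum.inl a) (Sum.inr b) ↔ O.dir (Sum.inr b) (Sum.inl a)) ∧
      (∀ a b, O'.dir (Sum.inr b) (Sum.inl a) ↔ O.dir (Sum.inl a) (Sum.inr b)) := by
  classical
  obtain ⟨hc1, hc2⟩ := cross_dirrl h12 hbr
  set T : Finset (V₁ ⊕ V₂) := Finset.univ.filter (fun z => z.isRight) with hT
  have hmem : ∀ z : V₁ ⊕ V₂, z ∈ T ↔ z.isRight := by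
    intro z; simp [hT]
  have hcross : ∀ a ∈ T, ∀ b ∉ T, ¬ O.dir b a := by
    intro a ha b hb hd
    cases a with
    | inl a => simp [hmem] at ha
    | inr a =>
      cases b with
      | inl b => exact hc2 b a hd
      | inr b => exact hb ((hmem _).mpr rfl)
  obtain ⟨O', hrt, hdir⟩ := flipSet T.card T O rfl hcross
  refine ⟨O', hrt, ?_, ?_, ?_, ?_⟩ <;> intro a b <;> rw [hdir] <;> simp [hmem]

include h12 in
/-- Flip the bridge `x → y` to `y → x` by clicking every vertex of the left side. -/
theorem flipLeft [Fintype V₁] [Fintype V₂] (O : AcyclicOrientation G)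
    (hbr : O.dir (Sum.inl x) (Sum.inr y)) :
    ∃ O' : AcyclicOrientation G, Relation.ReflTransGen IsClick O O' ∧
      (∀ a b, O'.dir (Sum.inl a) (Sum.inl b) ↔ O.dir (Sum.inl a) (Sum.inl b)) ∧
      (∀ a b, O'.dir (Sum.inr a) (Sum.inr b) ↔ O.dir (Sum.inr a) (Sum.inr b)) ∧
      (∀ a b, O'.dir (Sum.inl a) (Sum.inr b) ↔ O.dir (Sum.inr b) (Sum.inl a)) ∧
      (∀ a b, O'.dir (Sum.inr b) (Sum.inl a) ↔ O.dir (Sum.inl a) (Sum.inr b)) := by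
  classical
  obtain ⟨hc1, hc2⟩ := cross_dirlr h12 hbr
  set T : Finset (V₁ ⊕ V₂) := Finset.univ.filter (fun z => z.isLeft) with hT
  have hmem : ∀ z : V₁ ⊕ V₂, z ∈ T ↔ z.isLeft := by
    intro z; simp [hT]
  have hcross : ∀ a ∈ T, ∀ b ∉ T, ¬ O.dir b a := by
    intro a ha b hb hd
    cases a with
    | inr a => simp [hmem] at ha
    | inl a =>
      cases b with
      | inr b => exact hc2 a b hd
      | inl b => exact hb ((hmem _).mpr rfl)
  obtain ⟨O', hrt, hdir⟩ := flipSet T.card T O rfl hcross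
  refine ⟨O', hrt, ?_, ?_, ?_, ?_⟩ <;> intro a b <;> rw [hdir] <;> simp [hmem]

end Bridge
theorem clickOrientation_dir {V : Type*} {G : SimpleGraph V} (O : AcyclicOrientation G)
    (v : V) (hv : O.IsSource v) (a b : V) :
    (O.clickOrientation v hv).dir a b ↔
      (((a = v ∨ b = v) ∧ O.dir b a) ∨ (a ≠ v ∧ b ≠ v ∧ O.dir a b)) := Iff.rfl

section Bridge2

variable {V₁ V₂ : Type*} {G₁ : SimpleGraph V₁} {G₂ : SimpleGraph V₂} {x : V₁} {y : V₂}
  {G : SimpleGraph (V₁ ⊕ V₂)}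
  (h11 : ∀ a b, G.Adj (Sum.inl a) (Sum.inl b) ↔ G₁.Adj a b)
  (h22 : ∀ a b, G.Adj (Sum.inr a) (Sum.inr b) ↔ G₂.Adj a b)
  (h12 : ∀ a b, G.Adj (Sum.inl a) (Sum.inr b) ↔ (a = x ∧ b = y))

theorem glue_dir (O₁ : AcyclicOrientation G₁) (O₂ : AcyclicOrientation G₂) :
    (glue h11 h22 h12 O₁ O₂).dir = glueDir x y O₁ O₂ := rfl

theorem glue_click_left [Fintype V₁] [Fintype V₂] {O₁ O₁' : AcyclicOrientation G₁}
    (O₂ : AcyclicOrientation G₂) {v : V₁} (hw : O₁.ClickAt v O₁') :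
    Relation.ReflTransGen IsClick (glue h11 h22 h12 O₁ O₂) (glue h11 h22 h12 O₁' O₂) := by
  have hsrcG : (glue h11 h22 h12 O₁ O₂).IsSource (Sum.inl v) := by
    intro c
    cases c with
    | inl u => exact hw.1 u
    | inr u => exact fun h => h
  refine Relation.ReflTransGen.head
    ⟨Sum.inl v, (glue h11 h22 h12 O₁ O₂).clickAt_clickOrientation _ hsrcG⟩ ?_
  by_cases hvx : v = x
  · subst hvx
    have hbrc : ((glue h11 h22 h12 O₁ O₂).clickOrientation (Sum.inl v) hsrcG).dir
        (Sum.inr y) (Sum.inl v) := by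
      rw [clickOrientation_dir]
      exact Or.inl ⟨Or.inr rfl, ⟨rfl, rfl⟩⟩
    obtain ⟨O', hrt, hOll, hOrr, hOlr, hOrl⟩ := flipRight h12 _ hbrc
    have heq : O' = glue h11 h22 h12 O₁' O₂ := by
      apply AcyclicOrientation.ext'
      intro a b
      cases a with
      | inl a =>
        cases b with
        | inl b =>
          rw [hOll]
          simp only [clickOrientation_dir, glue_dir h11 h22 h12, glueDir, hw.2 a b]
          simp
        | inr b =>
          rw [hOlr a b]
          simp only [clickOrientation_dir, glue_dir h11 h22 h12, glueDir]
          constructor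
          · rintro (⟨-, h⟩ | ⟨-, -, h⟩)
            · exact h
            · exact h.elim
          · rintro ⟨rfl, rfl⟩
            exact Or.inl ⟨Or.inr rfl, rfl, rfl⟩
      | inr a =>
        cases b with
        | inl b =>
          rw [hOrl b a]
          simp only [clickOrientation_dir, glue_dir h11 h22 h12, glueDir]
          constructor
          · rintro (⟨-, h⟩ | ⟨h1, -, rfl, -⟩)
            · exact h
            · exact h1 rfl
          · exact fun h => h.elim
        | inr b =>
          rw [hOrr]
          simp only [clickOrientation_dir, glue_dir h11 h22 h12, glueDir]
          simp
    exact heq ▸ hrt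
  · have heq : (glue h11 h22 h12 O₁ O₂).clickOrientation (Sum.inl v) hsrcG
        = glue h11 h22 h12 O₁' O₂ := by
      apply AcyclicOrientation.ext'
      intro a b
      cases a with
      | inl a =>
        cases b with
        | inl b =>
          simp only [clickOrientation_dir, glue_dir h11 h22 h12, glueDir, hw.2 a b]
          simp
        | inr b =>
          simp only [clickOrientation_dir, glue_dir h11 h22 h12, glueDir]
          constructor
          · rintro (⟨-, h⟩ | ⟨-, -, h⟩)
            · exact h.elim
            · exact h
          · rintro ⟨rfl, rfl⟩
            exact Or.inr ⟨fun h => hvx (Sum.inl_injective h).symm,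
              fun h => Sum.inr_ne_inl h, rfl, rfl⟩
      | inr a =>
        cases b with
        | inl b =>
          simp only [clickOrientation_dir, glue_dir h11 h22 h12, glueDir]
          constructor
          · rintro (⟨h1, rfl, rfl⟩ | ⟨-, -, h⟩)
            · rcases h1 with h1 | h1
              · exact Sum.inr_ne_inl h1
              · exact hvx (Sum.inl_injective h1).symm
            · exact h
          · exact fun h => h.elim
        | inr b =>
          simp only [clickOrientation_dir, glue_dir h11 h22 h12, glueDir]
          simp
    rw [heq]

theorem glue_click_right [Fintype V₁] [Fintype V₂] (O₁ : AcyclicOrientation G₁)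
    {O₂ O₂' : AcyclicOrientation G₂} {v : V₂} (hw : O₂.ClickAt v O₂') :
    Relation.ReflTransGen IsClick (glue h11 h22 h12 O₁ O₂) (glue h11 h22 h12 O₁ O₂') := by
  by_cases hvy : v = y
  · subst hvy
    have hbr : (glue h11 h22 h12 O₁ O₂).dir (Sum.inl x) (Sum.inr v) := ⟨rfl, rfl⟩
    obtain ⟨Om, hrt, hOll, hOrr, hOlr, hOrl⟩ := flipLeft h12 _ hbr
    have hsrc : Om.IsSource (Sum.inr v) := by
      intro c
      cases c with
      | inl a => rw [hOlr]; exact fun h => h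
      | inr u => rw [hOrr]; exact hw.1 u
    have heq : Om.clickOrientation (Sum.inr v) hsrc = glue h11 h22 h12 O₁ O₂' := by
      apply AcyclicOrientation.ext'
      intro a b
      cases a with
      | inl a =>
        cases b with
        | inl b =>
          rw [clickOrientation_dir]
          simp only [hOll a b, hOll b a, glue_dir h11 h22 h12, glueDir]
          simp
        | inr b =>
          rw [clickOrientation_dir]
          simp only [hOrl a b, hOlr a b, glue_dir h11 h22 h12, glueDir]
          constructor
          · rintro (⟨-, h⟩ | ⟨-, -, h⟩)
            · exact h
            · exact h.elim
          · rintro ⟨rfl, rfl⟩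
            exact Or.inl ⟨Or.inr rfl, rfl, rfl⟩
      | inr a =>
        cases b with
        | inl b =>
          rw [clickOrientation_dir]
          simp only [hOlr b a, hOrl b a, glue_dir h11 h22 h12, glueDir]
          constructor
          · rintro (⟨-, h⟩ | ⟨h1, -, -, rfl⟩)
            · exact h
            · exact h1 rfl
          · exact fun h => h.elim
        | inr b =>
          rw [clickOrientation_dir]
          simp only [hOrr a b, hOrr b a, glue_dir h11 h22 h12, glueDir, hw.2 a b]
          simp
    refine hrt.trans ?_
    rw [← heq]
    exact Relation.ReflTransGen.single ⟨Sum.inr v, Om.clickAt_clickOrientation _ hsrc⟩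
  · have hsrc : (glue h11 h22 h12 O₁ O₂).IsSource (Sum.inr v) := by
      intro c
      cases c with
      | inl a => exact fun h => hvy h.2
      | inr u => exact hw.1 u
    have heq : (glue h11 h22 h12 O₁ O₂).clickOrientation (Sum.inr v) hsrc
        = glue h11 h22 h12 O₁ O₂' := by
      apply AcyclicOrientation.ext'
      intro a b
      cases a with
      | inl a =>
        cases b with
        | inl b =>
          simp only [clickOrientation_dir, glue_dir h11 h22 h12, glueDir]
          simp
        | inr b =>
          simp only [clickOrientation_dir, glue_dir h11 h22 h12, glueDir]
          constructor
          · rintro (⟨-, h⟩ | ⟨-, -, h⟩)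
            · exact h.elim
            · exact h
          · rintro ⟨rfl, rfl⟩
            exact Or.inr ⟨fun h => Sum.inl_ne_inr h,
              fun h => hvy (Sum.inr_injective h).symm, rfl, rfl⟩
      | inr a =>
        cases b with
        | inl b =>
          simp only [clickOrientation_dir, glue_dir h11 h22 h12, glueDir]
          constructor
          · rintro (⟨h1, -, rfl⟩ | ⟨-, -, h⟩)
            · rcases h1 with h1 | h1
              · exact hvy (Sum.inr_injective h1).symm
              · exact Sum.inl_ne_inr h1
            · exact h
          · exact fun h => h.elim
        | inr b =>
          simp only [clickOrientation_dir, glue_dir h11 h22 h12, glueDir, hw.2 a b]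
          simp
    rw [← heq]
    exact Relation.ReflTransGen.single
      ⟨Sum.inr v, (glue h11 h22 h12 O₁ O₂).clickAt_clickOrientation _ hsrc⟩

end Bridge2
section Bridge3

variable {V₁ V₂ : Type*} {G₁ : SimpleGraph V₁} {G₂ : SimpleGraph V₂} {x : V₁} {y : V₂}
  {G : SimpleGraph (V₁ ⊕ V₂)}
  (h11 : ∀ a b, G.Adj (Sum.inl a) (Sum.inl b) ↔ G₁.Adj a b)
  (h22 : ∀ a b, G.Adj (Sum.inr a) (Sum.inr b) ↔ G₂.Adj a b)
  (h12 : ∀ a b, G.Adj (Sum.inl a) (Sum.inr b) ↔ (a = x ∧ b = y))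

theorem restrict₁_glue (O₁ : AcyclicOrientation G₁) (O₂ : AcyclicOrientation G₂) :
    restrict₁ h11 (glue h11 h22 h12 O₁ O₂) = O₁ :=
  AcyclicOrientation.ext' fun _ _ => Iff.rfl

theorem restrict₂_glue (O₁ : AcyclicOrientation G₁) (O₂ : AcyclicOrientation G₂) :
    restrict₂ h22 (glue h11 h22 h12 O₁ O₂) = O₂ :=
  AcyclicOrientation.ext' fun _ _ => Iff.rfl

theorem glue_restrict [Fintype V₁] [Fintype V₂] (O : AcyclicOrientation G) :
    Relation.ReflTransGen IsClick O
      (glue h11 h22 h12 (restrict₁ h11 O) (restrict₂ h22 O)) := by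
  rcases O.total ((h12 x y).mpr ⟨rfl, rfl⟩) with hbr | hbr
  · obtain ⟨hc1, hc2⟩ := cross_dirlr h12 hbr
    have heq : glue h11 h22 h12 (restrict₁ h11 O) (restrict₂ h22 O) = O := by
      apply AcyclicOrientation.ext'
      intro a b
      cases a with
      | inl a =>
        cases b with
        | inl b => exact Iff.rfl
        | inr b => exact (hc1 a b).symm
      | inr a =>
        cases b with
        | inl b => exact ⟨fun h => h.elim, fun h => (hc2 b a h).elim⟩
        | inr b => exact Iff.rfl
    rw [heq]
  · obtain ⟨hc1, hc2⟩ := cross_dirrl h12 hbr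
    obtain ⟨O', hrt, hOll, hOrr, hOlr, hOrl⟩ := flipRight h12 O hbr
    have heq : O' = glue h11 h22 h12 (restrict₁ h11 O) (restrict₂ h22 O) := by
      apply AcyclicOrientation.ext'
      intro a b
      cases a with
      | inl a =>
        cases b with
        | inl b => exact hOll a b
        | inr b => rw [hOlr a b]; exact hc1 a b
      | inr a =>
        cases b with
        | inl b => rw [hOrl b a]; exact ⟨fun h => (hc2 b a h).elim, fun h => h.elim⟩
        | inr b => exact hOrr a b
    exact heq ▸ hrt

theorem clickAt_restrict₁ {O O' : AcyclicOrientation G} {v : V₁}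
    (hw : O.ClickAt (Sum.inl v) O') :
    (restrict₁ h11 O).ClickAt v (restrict₁ h11 O') := by
  refine ⟨fun a => hw.1 (Sum.inl a), fun a b => ?_⟩
  have h := hw.2 (Sum.inl a) (Sum.inl b)
  simpa [restrict₁] using h

theorem clickAt_restrict₂ {O O' : AcyclicOrientation G} {v : V₂}
    (hw : O.ClickAt (Sum.inr v) O') :
    (restrict₂ h22 O).ClickAt v (restrict₂ h22 O') := by
  refine ⟨fun a => hw.1 (Sum.inr a), fun a b => ?_⟩
  have h := hw.2 (Sum.inr a) (Sum.inr b)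
  simpa [restrict₂] using h

theorem restrict₁_clickAt_inr {O O' : AcyclicOrientation G} {v : V₂}
    (hw : O.ClickAt (Sum.inr v) O') : restrict₁ h11 O' = restrict₁ h11 O := by
  apply AcyclicOrientation.ext'
  intro a b
  have h := hw.2 (Sum.inl a) (Sum.inl b)
  show O'.dir (Sum.inl a) (Sum.inl b) ↔ O.dir (Sum.inl a) (Sum.inl b)
  rw [h]
  simp

theorem restrict₂_clickAt_inl {O O' : AcyclicOrientation G} {v : V₁}
    (hw : O.ClickAt (Sum.inl v) O') : restrict₂ h22 O' = restrict₂ h22 O := by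
  apply AcyclicOrientation.ext'
  intro a b
  have h := hw.2 (Sum.inr a) (Sum.inr b)
  show O'.dir (Sum.inr a) (Sum.inr b) ↔ O.dir (Sum.inr a) (Sum.inr b)
  rw [h]
  simp

end Bridge3
/-- If `Γ` is the union of `Γ₁` and `Γ₂` joined by a bridge `e = {x,y}`, then
`κ(Γ) = κ(Γ₁)·κ(Γ₂)`. -/
theorem kappa_bridge_mul {V₁ V₂ : Type*} [Fintype V₁] [Fintype V₂]
    (G₁ : SimpleGraph V₁) (G₂ : SimpleGraph V₂) (x : V₁) (y : V₂)
    (G : SimpleGraph (V₁ ⊕ V₂))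
    (h11 : ∀ a b, G.Adj (Sum.inl a) (Sum.inl b) ↔ G₁.Adj a b)
    (h22 : ∀ a b, G.Adj (Sum.inr a) (Sum.inr b) ↔ G₂.Adj a b)
    (h12 : ∀ a b, G.Adj (Sum.inl a) (Sum.inr b) ↔ (a = x ∧ b = y)) :
    kappa G = kappa G₁ * kappa G₂ := by
  classical
  set f : AcyclicOrientation G → Quotient (clickSetoid G₁) × Quotient (clickSetoid G₂) :=
    fun O => (Quotient.mk (clickSetoid G₁) (restrict₁ h11 O),
      Quotient.mk (clickSetoid G₂) (restrict₂ h22 O)) with hf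
  have wdf : ∀ O O' : AcyclicOrientation G, Relation.EqvGen IsClick O O' → f O = f O' := by
    intro O O' h
    induction h with
    | rel Oa Ob hab =>
      obtain ⟨w, hw⟩ := hab
      have h1 : Quotient.mk (clickSetoid G₁) (restrict₁ h11 Oa)
          = Quotient.mk (clickSetoid G₁) (restrict₁ h11 Ob) := by
        cases w with
        | inl v => exact Quotient.sound (Relation.EqvGen.rel _ _ ⟨v, clickAt_restrict₁ h11 hw⟩)
        | inr v => rw [restrict₁_clickAt_inr h11 hw]
      have h2 : Quotient.mk (clickSetoid G₂) (restrict₂ h22 Oa)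
          = Quotient.mk (clickSetoid G₂) (restrict₂ h22 Ob) := by
        cases w with
        | inl v => rw [restrict₂_clickAt_inl h22 hw]
        | inr v => exact Quotient.sound (Relation.EqvGen.rel _ _ ⟨v, clickAt_restrict₂ h22 hw⟩)
      simp only [hf]
      rw [h1, h2]
    | refl O => rfl
    | symm _ _ _ ih => exact ih.symm
    | trans _ _ _ _ _ ih1 ih2 => exact ih1.trans ih2
  set g : AcyclicOrientation G₁ → AcyclicOrientation G₂ → Quotient (clickSetoid G) :=
    fun O₁ O₂ => Quotient.mk (clickSetoid G) (glue h11 h22 h12 O₁ O₂) with hg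
  have wdg1 : ∀ (O₂ : AcyclicOrientation G₂) (O₁ O₁' : AcyclicOrientation G₁),
      Relation.EqvGen IsClick O₁ O₁' → g O₁ O₂ = g O₁' O₂ := by
    intro O₂ O₁ O₁' h
    induction h with
    | rel Oa Ob hab =>
      obtain ⟨v, hw⟩ := hab
      exact Quotient.sound (rtg_eqvGen (glue_click_left h11 h22 h12 O₂ hw))
    | refl O => rfl
    | symm _ _ _ ih => exact ih.symm
    | trans _ _ _ _ _ ih1 ih2 => exact ih1.trans ih2
  have wdg2 : ∀ (O₁ : AcyclicOrientation G₁) (O₂ O₂' : AcyclicOrientation G₂),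
      Relation.EqvGen IsClick O₂ O₂' → g O₁ O₂ = g O₁ O₂' := by
    intro O₁ O₂ O₂' h
    induction h with
    | rel Oa Ob hab =>
      obtain ⟨v, hw⟩ := hab
      exact Quotient.sound (rtg_eqvGen (glue_click_right h11 h22 h12 O₁ hw))
    | refl O => rfl
    | symm _ _ _ ih => exact ih.symm
    | trans _ _ _ _ _ ih1 ih2 => exact ih1.trans ih2
  have wdg : ∀ (O₁ : AcyclicOrientation G₁) (O₂ : AcyclicOrientation G₂)
      (O₁' : AcyclicOrientation G₁) (O₂' : AcyclicOrientation G₂),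
      Relation.EqvGen IsClick O₁ O₁' → Relation.EqvGen IsClick O₂ O₂' →
      g O₁ O₂ = g O₁' O₂' :=
    fun O₁ O₂ O₁' O₂' hl hr => (wdg1 O₂ O₁ O₁' hl).trans (wdg2 O₁' O₂ O₂' hr)
  let e : Quotient (clickSetoid G) ≃ Quotient (clickSetoid G₁) × Quotient (clickSetoid G₂) :=
    { toFun := Quotient.lift f wdf
      invFun := fun p => Quotient.lift₂ g wdg p.1 p.2
      left_inv := by
        intro q
        induction q using Quotient.ind with
        | _ O =>
          show Quotient.lift₂ g wdg
            (Quotient.mk (clickSetoid G₁) (restrict₁ h11 O))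
            (Quotient.mk (clickSetoid G₂) (restrict₂ h22 O)) = Quotient.mk (clickSetoid G) O
          show Quotient.mk (clickSetoid G)
            (glue h11 h22 h12 (restrict₁ h11 O) (restrict₂ h22 O)) = Quotient.mk (clickSetoid G) O
          exact Quotient.sound (Relation.EqvGen.symm _ _ (rtg_eqvGen (glue_restrict h11 h22 h12 O)))
      right_inv := by
        rintro ⟨q1, q2⟩
        induction q1 using Quotient.ind with
        | _ O₁ =>
          induction q2 using Quotient.ind with
          | _ O₂ =>
            show f (glue h11 h22 h12 O₁ O₂) = _
            simp only [hf]
            rw [restrict₁_glue, restrict₂_glue] }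
  have hcard := Nat.card_congr e
  rw [Nat.card_prod] at hcard
  exact hcard
end

section
/- Let Γ be a finite simple graph and fix a cycle basis B of Γ. Two acyclic orientations O^1, O^2 of Γ are click-equivalent if and only if ν_C(O^1) = ν_C(O^2) for every cycle C in B. -/
variable {V : Type*}

open AcyclicOrientation

/-- The signed edge-incidence function of a closed walk. -/
def walkVec [DecidableEq V] (G : SimpleGraph V) {u : V} (p : G.Walk u u) : V → V → ℤ :=
  fun a b => ((p.darts.filter (fun d => decide (d.toProd = (a, b)))).length : ℤ) -
    ((p.darts.filter (fun d => decide (d.toProd = (b, a)))).length : ℤ)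
/-! ### Auxiliary development for `clickEquiv_iff_nu_eq_on_basis` -/

namespace ClickPf

open SimpleGraph AcyclicOrientation
open scoped Classical

variable {G : SimpleGraph V}

open scoped Classical in
/-- Sign of a pair under an orientation. -/
noncomputable def sg (O : AcyclicOrientation G) (a b : V) : ℤ := if O.dir a b then 1 else -1

lemma asymm (O : AcyclicOrientation G) {a b : V} (h : O.dir a b) : ¬ O.dir b a :=
  fun h' => O.acyclic a (Relation.TransGen.head h (Relation.TransGen.single h'))

lemma dir_of_not_dir (O : AcyclicOrientation G) {a b : V} (h : G.Adj a b)
    (h' : ¬ O.dir b a) : O.dir a b := (O.total h).resolve_right h'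

lemma sg_symm (O : AcyclicOrientation G) {a b : V} (h : G.Adj a b) :
    sg O b a = - sg O a b := by
  rcases O.total h with hd | hd
  · simp [sg, hd, asymm O hd]
  · simp [sg, hd, asymm O hd]

lemma nu_eq_sum_sg (O : AcyclicOrientation G) {u : V} (p : G.Walk u u) :
    nu O p = (p.darts.map (fun d => sg O d.toProd.1 d.toProd.2)).sum := rfl

lemma sum_map_sub {α : Type*} (l : List α) (f g : α → ℤ) :
    (l.map (fun x => f x - g x)).sum = (l.map f).sum - (l.map g).sum := by
  induction l with
  | nil => simp
  | cons a l ih => simp only [List.map_cons, List.sum_cons, ih]; ring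

lemma sum_map_neg {α : Type*} (l : List α) (f : α → ℤ) :
    (l.map (fun x => - f x)).sum = - (l.map f).sum := by
  induction l with
  | nil => simp
  | cons a l ih => simp only [List.map_cons, List.sum_cons, ih]; ring

/-- Mirror of an orientation equality: extensionality for `AcyclicOrientation`. -/
lemma ext_dir {O₁ O₂ : AcyclicOrientation G} (h : O₁.dir = O₂.dir) : O₁ = O₂ := by
  cases O₁; cases O₂; cases h; rfl

lemma eq_of_agree {O₁ O₂ : AcyclicOrientation G}
    (h : ∀ a b, G.Adj a b → (O₁.dir a b ↔ O₂.dir a b)) : O₁ = O₂ := by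
  apply ext_dir
  funext a b
  apply propext
  constructor
  · intro hd; exact (h a b (O₁.dir_adj hd)).mp hd
  · intro hd; exact (h a b (O₂.dir_adj hd)).mpr hd

/-! #### Click invariance of `nu` -/

lemma telescope (v : V) : ∀ {a b : V} (p : G.Walk a b),
    (p.darts.map (fun d => (if d.toProd.2 = v then (2:ℤ) else 0)
      - (if d.toProd.1 = v then 2 else 0))).sum
      = (if b = v then (2:ℤ) else 0) - (if a = v then 2 else 0) := by
  intro a b p
  induction p with
  | nil => simp
  | @cons a c b h q ih => simp only [SimpleGraph.Walk.darts_cons, List.map_cons,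
      List.sum_cons, ih]; ring

lemma nu_clickAt {O O' : AcyclicOrientation G} {v : V} (h : O.ClickAt v O')
    {u : V} (p : G.Walk u u) : nu O' p = nu O p := by
  obtain ⟨hs, hiff⟩ := h
  have key : ∀ d : G.Dart, sg O' d.toProd.1 d.toProd.2 - sg O d.toProd.1 d.toProd.2
      = (if d.toProd.2 = v then (2:ℤ) else 0) - (if d.toProd.1 = v then 2 else 0) := by
    intro d
    obtain ⟨⟨a, b⟩, hadj⟩ := d
    simp only at hadj ⊢
    by_cases h1 : a = v
    · subst h1
      have h2 : b ≠ a := fun hh => G.loopless.irrefl a (hh ▸ hadj)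
      have hd : O.dir a b := dir_of_not_dir O hadj (hs b)
      have hd' : ¬ O'.dir a b := by
        rw [hiff]
        rintro (⟨-, hba⟩ | ⟨hne, -⟩)
        · exact hs b hba
        · exact hne rfl
      simp [sg, hd, hd', h2]
    · by_cases h2 : b = v
      · subst h2
        have hd : O.dir b a := dir_of_not_dir O hadj.symm (hs a)
        have hnd : ¬ O.dir a b := asymm O hd
        have hd' : O'.dir a b := by
          rw [hiff]; exact Or.inl ⟨Or.inr rfl, hd⟩
        simp [sg, hd', hnd, h1]
      · have hd' : O'.dir a b ↔ O.dir a b := by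
          rw [hiff]
          constructor
          · rintro (⟨h3 | h3, -⟩ | ⟨-, -, h3⟩)
            · exact absurd h3 h1
            · exact absurd h3 h2
            · exact h3
          · intro h3; exact Or.inr ⟨h1, h2, h3⟩
        simp [sg, hd', h1, h2]
  have := telescope (G := G) v p
  rw [show (fun d : G.Dart => (if d.toProd.2 = v then (2:ℤ) else 0)
      - (if d.toProd.1 = v then 2 else 0))
    = fun d : G.Dart => sg O' d.toProd.1 d.toProd.2 - sg O d.toProd.1 d.toProd.2
    from funext fun d => (key d).symm] at this
  rw [sum_map_sub] at this
  rw [nu_eq_sum_sg, nu_eq_sum_sg]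
  rw [sub_self] at this
  omega

lemma nu_clickEquiv {O O' : AcyclicOrientation G} (h : ClickEquiv O O')
    {u : V} (p : G.Walk u u) : nu O p = nu O' p := by
  induction h with
  | refl => rfl
  | tail hrel hcl ih =>
      obtain ⟨v, hv⟩ := hcl
      rw [ih, ← nu_clickAt hv p]

/-! #### The identity `2 ν = Σ walkVec · sg` -/

section FintypeV
variable [Fintype V] [DecidableEq V]

lemma sum_filter_toProd (l : List G.Dart) (f : V × V → ℤ) :
    ∑ x : V × V, ((l.filter (fun d => decide (d.toProd = x))).length : ℤ) * f x
      = (l.map (fun d => f d.toProd)).sum := by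
  induction l with
  | nil => simp
  | cons d l ih =>
    have hx : ∀ x : V × V, (((d :: l).filter (fun e => decide (e.toProd = x))).length : ℤ)
        = ((l.filter (fun e => decide (e.toProd = x))).length : ℤ)
          + (if d.toProd = x then 1 else 0) := by
      intro x
      by_cases hdx : d.toProd = x <;> simp [List.filter_cons, hdx]
    simp only [hx, List.map_cons, List.sum_cons, add_mul]
    rw [Finset.sum_add_distrib, ih]
    have h2 : ∑ x : V × V, (if d.toProd = x then (1:ℤ) else 0) * f x = f d.toProd := by
      rw [Finset.sum_congr rfl (fun x _ => by rw [ite_mul, zero_mul, one_mul])]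
      simp
    rw [h2]; ring

lemma two_nu (O : AcyclicOrientation G) {u : V} (p : G.Walk u u) :
    2 * nu O p = ∑ x : V × V, walkVec G p x.1 x.2 * sg O x.1 x.2 := by
  have h1 : ∑ x : V × V,
      ((p.darts.filter (fun d => decide (d.toProd = x))).length : ℤ) * sg O x.1 x.2
      = nu O p := by
    rw [sum_filter_toProd p.darts (fun x => sg O x.1 x.2), nu_eq_sum_sg]
  have h2 : ∑ x : V × V,
      ((p.darts.filter (fun d => decide (d.toProd = (x.2, x.1)))).length : ℤ) * sg O x.1 x.2
      = - nu O p := by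
    have hre : ∑ x : V × V,
        ((p.darts.filter (fun d => decide (d.toProd = (x.2, x.1)))).length : ℤ) * sg O x.1 x.2
        = ∑ y : V × V,
        ((p.darts.filter (fun d => decide (d.toProd = y))).length : ℤ) * sg O y.2 y.1 := by
      exact Fintype.sum_equiv (Equiv.prodComm V V) _ _ (fun x => rfl)
    rw [hre, sum_filter_toProd p.darts (fun y => sg O y.2 y.1)]
    have hmap : (fun d : G.Dart => sg O d.toProd.2 d.toProd.1)
        = fun d : G.Dart => - sg O d.toProd.1 d.toProd.2 :=
      funext fun d => sg_symm O d.adj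
    rw [hmap, sum_map_neg, nu_eq_sum_sg]
  have expand : ∑ x : V × V, walkVec G p x.1 x.2 * sg O x.1 x.2
      = (∑ x : V × V,
          ((p.darts.filter (fun d => decide (d.toProd = x))).length : ℤ) * sg O x.1 x.2)
        - ∑ x : V × V,
          ((p.darts.filter (fun d => decide (d.toProd = (x.2, x.1)))).length : ℤ) * sg O x.1 x.2 := by
    rw [← Finset.sum_sub_distrib]
    refine Finset.sum_congr rfl fun x _ => ?_
    rw [walkVec, ← sub_mul]
  rw [expand, h1, h2]; ring

lemma nu_eq_on_cycles {O₁ O₂ : AcyclicOrientation G}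
    (B : List ((u : V) × G.Walk u u))
    (hBspan : ∀ (u : V) (p : G.Walk u u), p.IsCycle →
      ∃ coef : Fin B.length → ℤ, ∀ a b : V,
        walkVec G p a b = ∑ i : Fin B.length, coef i * walkVec G (B.get i).2 a b)
    (hnu : ∀ pb ∈ B, nu O₁ pb.2 = nu O₂ pb.2)
    {u : V} (p : G.Walk u u) (hp : p.IsCycle) : nu O₁ p = nu O₂ p := by
  obtain ⟨coef, hcoef⟩ := hBspan u p hp
  have key : ∀ O : AcyclicOrientation G, 2 * nu O p
      = ∑ i : Fin B.length, coef i * (2 * nu O (B.get i).2) := by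
    intro O
    rw [two_nu]
    calc ∑ x : V × V, walkVec G p x.1 x.2 * sg O x.1 x.2
        = ∑ x : V × V, (∑ i, coef i * walkVec G (B.get i).2 x.1 x.2) * sg O x.1 x.2 :=
          Finset.sum_congr rfl fun x _ => by rw [hcoef]
      _ = ∑ x : V × V, ∑ i, coef i * (walkVec G (B.get i).2 x.1 x.2 * sg O x.1 x.2) :=
          Finset.sum_congr rfl fun x _ => by
            rw [Finset.sum_mul]
            exact Finset.sum_congr rfl fun i _ => by ring
      _ = ∑ i, ∑ x : V × V, coef i * (walkVec G (B.get i).2 x.1 x.2 * sg O x.1 x.2) :=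
          Finset.sum_comm
      _ = ∑ i, coef i * (2 * nu O (B.get i).2) := by
          refine Finset.sum_congr rfl fun i _ => ?_
          rw [← Finset.mul_sum, ← two_nu]
  have h1 := key O₁
  have h2 := key O₂
  have hB : ∀ i : Fin B.length, nu O₁ (B.get i).2 = nu O₂ (B.get i).2 :=
    fun i => hnu (B.get i) (List.get_mem B i)
  have h3 : 2 * nu O₁ p = 2 * nu O₂ p := by
    rw [h1, h2]
    exact Finset.sum_congr rfl fun i _ => by rw [hB i]
  omega

end FintypeV

/-! #### From cycles to all closed walks -/

noncomputable def gl (O₁ O₂ : AcyclicOrientation G) (d : G.Dart) : ℤ :=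
  sg O₁ d.toProd.1 d.toProd.2 - sg O₂ d.toProd.1 d.toProd.2

noncomputable def Dsum (O₁ O₂ : AcyclicOrientation G) {x y : V} (q : G.Walk x y) : ℤ :=
  (q.darts.map (gl O₁ O₂)).sum

variable {O₁ O₂ : AcyclicOrientation G}

lemma Dsum_eq {u : V} (p : G.Walk u u) : Dsum O₁ O₂ p = nu O₁ p - nu O₂ p := by
  rw [Dsum, nu_eq_sum_sg, nu_eq_sum_sg, ← sum_map_sub]; rfl

lemma Dsum_append {x y z : V} (p : G.Walk x y) (q : G.Walk y z) :
    Dsum O₁ O₂ (p.append q) = Dsum O₁ O₂ p + Dsum O₁ O₂ q := by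
  simp [Dsum, SimpleGraph.Walk.darts_append]

lemma Dsum_cons {x y z : V} (h : G.Adj x y) (q : G.Walk y z) :
    Dsum O₁ O₂ (SimpleGraph.Walk.cons h q) = gl O₁ O₂ ⟨(x, y), h⟩ + Dsum O₁ O₂ q := by
  simp [Dsum, SimpleGraph.Walk.darts_cons]

lemma gl_symm (d : G.Dart) : gl O₁ O₂ d.symm = - gl O₁ O₂ d := by
  have h := d.adj
  simp only [gl, SimpleGraph.Dart.symm_toProd, Prod.fst_swap, Prod.snd_swap,
    sg_symm O₁ h, sg_symm O₂ h]
  ring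

lemma Dsum_reverse {x y : V} (p : G.Walk x y) :
    Dsum O₁ O₂ p.reverse = - Dsum O₁ O₂ p := by
  rw [Dsum, SimpleGraph.Walk.darts_reverse, List.map_reverse, List.sum_reverse, List.map_map]
  have hfun : gl O₁ O₂ ∘ SimpleGraph.Dart.symm = fun d => - gl O₁ O₂ d :=
    funext fun d => gl_symm d
  rw [hfun, sum_map_neg, Dsum]

lemma Dsum_copy {x y x' y' : V} (p : G.Walk x y) (hx : x = x') (hy : y = y') :
    Dsum O₁ O₂ (p.copy hx hy) = Dsum O₁ O₂ p := by
  subst hx; subst hy; rfl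

lemma end_not_mem_dropLast : ∀ {a b : V} (r : G.Walk a b),
    r.support.Nodup → b ∉ r.support.dropLast := by
  intro a b r
  induction r with
  | nil => simp
  | @cons a c b h q ih =>
    intro hnd hmem
    rw [SimpleGraph.Walk.support_cons] at hnd hmem
    obtain ⟨h1, h2⟩ := List.nodup_cons.mp hnd
    obtain ⟨l, hl⟩ : ∃ l, q.support = l := ⟨q.support, rfl⟩
    rcases l with _ | ⟨z, l⟩
    · exact q.support_ne_nil hl
    · rw [hl, List.dropLast_cons₂, List.mem_cons] at hmem
      rcases hmem with hmem | hmem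
      · exact h1 (hmem ▸ (hl ▸ q.end_mem_support))
      · exact ih h2 (hl ▸ hmem)

lemma end_mem_tail {a b : V} (r : G.Walk a b) (h : r.length ≠ 0) : b ∈ r.support.tail := by
  cases r with
  | nil => simp at h
  | cons h' q => rw [SimpleGraph.Walk.support_cons, List.tail_cons]; exact q.end_mem_support

lemma Dsum_length_one {a b : V} (w : G.Walk a b) (h1 : w.length = 1) :
    ∃ (h : G.Adj a b), Dsum O₁ O₂ w = gl O₁ O₂ ⟨(a, b), h⟩ := by
  cases w with
  | nil => simp at h1
  | @cons a y b h r =>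
    have hr0 : r.length = 0 := by
      rw [SimpleGraph.Walk.length_cons] at h1; omega
    have hyb : y = b := SimpleGraph.Walk.eq_of_length_eq_zero hr0
    subst hyb
    have hrnil : r = SimpleGraph.Walk.nil := SimpleGraph.Walk.nil_iff_eq_nil.mp (SimpleGraph.Walk.length_eq_zero_iff.mp hr0)
    subst hrnil
    refine ⟨h, ?_⟩
    rw [Dsum_cons]
    simp [Dsum]

lemma not_dart_start_end {c b : V} (q : G.Walk c b) (hnd : q.support.Nodup)
    (hq2 : 2 ≤ q.length) {d : G.Dart} (hd : d ∈ q.darts)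
    (h1 : d.toProd.1 = c) (h2 : d.toProd.2 = b) : False := by
  cases q with
  | nil => simp at hd
  | @cons c y b h' r =>
    rw [SimpleGraph.Walk.darts_cons, List.mem_cons] at hd
    rcases hd with rfl | hd
    · have hyb : y = b := h2
      subst hyb
      have hr0 : r.length ≠ 0 := by
        rw [SimpleGraph.Walk.length_cons] at hq2; omega
      have h4 := end_mem_tail r hr0
      have h5 : r.support.Nodup := by
        rw [SimpleGraph.Walk.support_cons] at hnd
        exact (List.nodup_cons.mp hnd).2
      rw [SimpleGraph.Walk.support_eq_cons r] at h5
      exact (List.nodup_cons.mp h5).1 h4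
    · have hc : d.toProd.1 ∈ r.support :=
        SimpleGraph.Walk.dart_fst_mem_support_of_mem_darts r hd
      rw [h1] at hc
      rw [SimpleGraph.Walk.support_cons] at hnd
      exact (List.nodup_cons.mp hnd).1 hc

lemma split_closed [DecidableEq V] {x : V} (q : G.Walk x x)
    (hcnt : 2 ≤ q.support.tail.count x) (hn0 : q.length ≠ 0) :
    ∃ (c₁ c₂ : G.Walk x x), Dsum O₁ O₂ q = Dsum O₁ O₂ c₁ + Dsum O₁ O₂ c₂ ∧
      c₁.length < q.length ∧ c₂.length < q.length := by
  cases q with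
  | nil => simp at hn0
  | @cons _ y _ h r =>
    rw [SimpleGraph.Walk.support_cons, List.tail_cons] at hcnt
    have hxr : x ∈ r.support := by
      have hpos : 0 < r.support.count x := by omega
      exact List.count_pos_iff.mp hpos
    have hspec := r.take_spec hxr
    have hdrlen : (r.dropUntil x hxr).length ≠ 0 := by
      intro h0
      have hdnil : r.dropUntil x hxr = SimpleGraph.Walk.nil :=
        SimpleGraph.Walk.nil_iff_eq_nil.mp (SimpleGraph.Walk.length_eq_zero_iff.mp h0)
      rw [hdnil, SimpleGraph.Walk.append_nil] at hspec
      have h1 : (r.takeUntil x hxr).support.count x = 1 :=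
        r.count_support_takeUntil_eq_one hxr
      rw [← hspec] at hcnt
      omega
    have hlensum : (r.takeUntil x hxr).length + (r.dropUntil x hxr).length = r.length := by
      have hcong := congrArg SimpleGraph.Walk.length hspec
      rwa [SimpleGraph.Walk.length_append] at hcong
    refine ⟨SimpleGraph.Walk.cons h (r.takeUntil x hxr), r.dropUntil x hxr, ?_, ?_, ?_⟩
    · conv_lhs => rw [← hspec]
      rw [Dsum_cons, Dsum_cons, Dsum_append]
      ring
    · rw [SimpleGraph.Walk.length_cons, SimpleGraph.Walk.length_cons]
      omega
    · rw [SimpleGraph.Walk.length_cons]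
      omega

lemma Dsum_closed_eq_zero [DecidableEq V]
    (hcyc : ∀ (u : V) (p : G.Walk u u), p.IsCycle → Dsum O₁ O₂ p = 0) :
    ∀ (u : V) (p : G.Walk u u), Dsum O₁ O₂ p = 0 := by
  suffices H : ∀ (n : ℕ) (u : V) (p : G.Walk u u), p.length = n → Dsum O₁ O₂ p = 0 by
    exact fun u p => H p.length u p rfl
  intro n
  induction n using Nat.strong_induction_on with
  | _ n ih =>
  intro u p hlen
  by_cases h0 : p.length = 0
  · rw [SimpleGraph.Walk.nil_iff_eq_nil.mp (SimpleGraph.Walk.length_eq_zero_iff.mp h0)]; rfl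
  by_cases hnd : p.support.tail.Nodup
  · cases p with
    | nil => simp at h0
    | @cons u c _ h q =>
      have hndq : q.support.Nodup := by
        rwa [SimpleGraph.Walk.support_cons, List.tail_cons] at hnd
      by_cases h1 : q.length = 0
      · have hcu : c = u := SimpleGraph.Walk.eq_of_length_eq_zero h1
        subst hcu
        exact absurd h (G.loopless.irrefl c)
      by_cases h2 : q.length = 1
      · -- length-2 closed walk: the two darts cancel
        obtain ⟨hcu, hq⟩ := Dsum_length_one (O₁ := O₁) (O₂ := O₂) q h2
        rw [Dsum_cons, hq]
        have hglr : gl O₁ O₂ ⟨(c, u), hcu⟩ = - gl O₁ O₂ ⟨(u, c), h⟩ :=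
          gl_symm ⟨(u, c), h⟩
        rw [hglr]; ring
      · -- length ≥ 3 : a genuine cycle
        have hq2 : 2 ≤ q.length := by omega
        have hpath : q.IsPath := by rw [SimpleGraph.Walk.isPath_def]; exact hndq
        have hedge : s(u, c) ∉ q.edges := by
          intro he
          rw [SimpleGraph.Walk.edges, List.mem_map] at he
          obtain ⟨d, hd, hde⟩ := he
          have hcases : (d.toProd.1 = u ∧ d.toProd.2 = c) ∨
              (d.toProd.1 = c ∧ d.toProd.2 = u) := by
            have hsym2 : s(d.toProd.1, d.toProd.2) = s(u, c) := hde
            rwa [Sym2.eq_iff] at hsym2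
          rcases hcases with ⟨hdu, hdc⟩ | ⟨hdc, hdu⟩
          · have hu : u ∈ q.darts.map (·.fst) := List.mem_map.mpr ⟨d, hd, hdu⟩
            rw [SimpleGraph.Walk.map_fst_darts] at hu
            exact end_not_mem_dropLast q hndq hu
          · exact not_dart_start_end q hndq hq2 hd hdc hdu
        have hcycle : (SimpleGraph.Walk.cons h q).IsCycle :=
          (SimpleGraph.Walk.cons_isCycle_iff q h).mpr ⟨hpath, hedge⟩
        exact hcyc u _ hcycle
  · -- a repeated internal vertex: rotate and split
    obtain ⟨x, hx2⟩ : ∃ x, 2 ≤ p.support.tail.count x := by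
      by_contra hno
      push_neg at hno
      exact hnd (List.nodup_iff_count_le_one.mpr fun x => by have := hno x; omega)
    have hxs : x ∈ p.support := by
      have hx1 : 0 < p.support.tail.count x := by omega
      exact List.mem_of_mem_tail (List.count_pos_iff.mp hx1)
    have hperm : ((p.rotate x hxs).darts).Perm p.darts := (p.rotate_darts x hxs).perm
    have hDq : Dsum O₁ O₂ (p.rotate x hxs) = Dsum O₁ O₂ p := (hperm.map _).sum_eq
    have hlenq : (p.rotate x hxs).length = n := by
      rw [← SimpleGraph.Walk.length_darts, hperm.length_eq, SimpleGraph.Walk.length_darts, hlen]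
    have hcntq : 2 ≤ (p.rotate x hxs).support.tail.count x := by
      rw [← SimpleGraph.Walk.map_snd_darts] at hx2 ⊢
      rw [(hperm.map (·.snd)).count_eq]
      exact hx2
    obtain ⟨c₁, c₂, hsplit, hl1, hl2⟩ := split_closed (p.rotate x hxs) hcntq (by omega)
    rw [← hDq, hsplit, ih c₁.length (by omega) x c₁ rfl, ih c₂.length (by omega) x c₂ rfl]
    ring

lemma nu_eq_closed [DecidableEq V]
    (hcyc : ∀ (u : V) (p : G.Walk u u), p.IsCycle → nu O₁ p = nu O₂ p)
    (u : V) (p : G.Walk u u) : nu O₁ p = nu O₂ p := by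
  have h := Dsum_closed_eq_zero (O₁ := O₁) (O₂ := O₂)
    (fun u p hp => by rw [Dsum_eq, hcyc u p hp, sub_self]) u p
  rw [Dsum_eq] at h
  exact sub_eq_zero.mp h

/-! #### The potential function -/

lemma Dsum_indep (hcl : ∀ (u : V) (p : G.Walk u u), Dsum O₁ O₂ p = 0)
    {x y : V} (p q : G.Walk x y) : Dsum O₁ O₂ p = Dsum O₁ O₂ q := by
  have h := hcl x (p.append q.reverse)
  rw [Dsum_append, Dsum_reverse] at h
  omega

noncomputable def pot (O₁ O₂ : AcyclicOrientation G) (x : V) : ℤ :=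
  Dsum O₁ O₂ (Classical.choice
    (Quotient.mk_out (s := G.reachableSetoid) x : G.Reachable _ x))

lemma pot_spec (hcl : ∀ (u : V) (p : G.Walk u u), Dsum O₁ O₂ p = 0)
    (x r : V) (hr : r = (Quotient.mk (G.reachableSetoid) x).out) (w : G.Walk r x) :
    pot O₁ O₂ x = Dsum O₁ O₂ w := by
  subst hr
  exact Dsum_indep hcl _ w

lemma pot_adj (hcl : ∀ (u : V) (p : G.Walk u u), Dsum O₁ O₂ p = 0)
    {a b : V} (hab : G.Adj a b) :
    pot O₁ O₂ b - pot O₁ O₂ a = sg O₁ a b - sg O₂ a b := by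
  have hra : G.Reachable ((Quotient.mk (G.reachableSetoid) a).out) a :=
    Quotient.mk_out (s := G.reachableSetoid) a
  obtain ⟨wa⟩ := hra
  have hrab : (Quotient.mk (G.reachableSetoid) a).out
      = (Quotient.mk (G.reachableSetoid) b).out :=
    congrArg Quotient.out (Quotient.sound hab.reachable)
  have h1 : pot O₁ O₂ a = Dsum O₁ O₂ wa := pot_spec hcl a _ rfl wa
  have h2 : pot O₁ O₂ b
      = Dsum O₁ O₂ (wa.append (SimpleGraph.Walk.cons hab SimpleGraph.Walk.nil)) :=
    pot_spec hcl b _ hrab _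
  rw [h1, h2, Dsum_append, Dsum_cons]
  have hnil : Dsum O₁ O₂ (SimpleGraph.Walk.nil : G.Walk b b) = 0 := rfl
  rw [hnil]
  have : gl O₁ O₂ ⟨(a, b), hab⟩ = sg O₁ a b - sg O₂ a b := rfl
  rw [this]; ring

lemma sg_cases (O : AcyclicOrientation G) (a b : V) : sg O a b = 1 ∨ sg O a b = -1 := by
  unfold sg; split_ifs <;> simp

lemma pot_walk_even {φ : V → ℤ}
    (hφ : ∀ a b, G.Adj a b → φ b - φ a = sg O₁ a b - sg O₂ a b) :
    ∀ {x y : V} (p : G.Walk x y), 2 ∣ (φ y - φ x) := by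
  intro x y p
  induction p with
  | nil => simp
  | @cons x c y h q ih =>
    have h1 : 2 ∣ (φ c - φ x) := by
      rw [hφ x c h]
      rcases sg_cases O₁ x c with h1 | h1 <;> rcases sg_cases O₂ x c with h2 | h2 <;>
        rw [h1, h2] <;> decide
    have h3 : φ y - φ x = (φ c - φ x) + (φ y - φ c) := by ring
    rw [h3]
    exact dvd_add h1 ih

/-! #### The click construction and the main induction -/

def clickDir (O : AcyclicOrientation G) (v : V) (a b : V) : Prop :=
  ((a = v ∨ b = v) ∧ O.dir b a) ∨ (a ≠ v ∧ b ≠ v ∧ O.dir a b)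

lemma clickDir_not_from {O : AcyclicOrientation G} {v : V} (hs : O.IsSource v) (b : V) :
    ¬ clickDir O v v b := by
  rintro (⟨-, hd⟩ | ⟨hne, -⟩)
  · exact hs b hd
  · exact hne rfl

def clickOrient (O : AcyclicOrientation G) (v : V) (hs : O.IsSource v) :
    AcyclicOrientation G where
  dir := clickDir O v
  dir_adj := by
    rintro a b (⟨-, hd⟩ | ⟨-, -, hd⟩)
    · exact (O.dir_adj hd).symm
    · exact O.dir_adj hd
  total := by
    intro a b hab
    by_cases ha : a = v
    · subst ha
      have hd : O.dir a b := dir_of_not_dir O hab (hs b)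
      exact Or.inr (Or.inl ⟨Or.inr rfl, hd⟩)
    · by_cases hb : b = v
      · subst hb
        have hd : O.dir b a := dir_of_not_dir O hab.symm (hs a)
        exact Or.inl (Or.inl ⟨Or.inr rfl, hd⟩)
      · rcases O.total hab with hd | hd
        · exact Or.inl (Or.inr ⟨ha, hb, hd⟩)
        · exact Or.inr (Or.inr ⟨hb, ha, hd⟩)
  acyclic := by
    intro a h
    have hT : ∀ {x y : V}, Relation.TransGen (clickDir O v) x y →
        Relation.TransGen O.dir x y ∨ y = v := by
      intro x y hxy
      induction hxy with
      | single h1 =>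
          rcases h1 with ⟨hxy, hd⟩ | ⟨-, -, hd⟩
          · rcases hxy with rfl | rfl
            · exact absurd hd (hs _)
            · exact Or.inr rfl
          · exact Or.inl (Relation.TransGen.single hd)
      | @tail c y h1 h2 ih =>
          have hcv : c ≠ v := by
            intro hcv; subst hcv; exact clickDir_not_from hs y h2
          have hTc : Relation.TransGen O.dir x c := ih.resolve_right hcv
          rcases h2 with ⟨hcy, hd⟩ | ⟨-, -, hd⟩
          · rcases hcy with rfl | rfl
            · exact absurd rfl hcv
            · exact Or.inr rfl
          · exact Or.inl (hTc.tail hd)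
    by_cases hav : a = v
    · subst hav
      obtain ⟨c, h1, -⟩ := Relation.TransGen.head'_iff.mp h
      exact clickDir_not_from hs _ h1
    · exact O.acyclic a ((hT h).resolve_right hav)

lemma clickAt_clickOrient (O : AcyclicOrientation G) (v : V) (hs : O.IsSource v) :
    O.ClickAt v (clickOrient O v hs) :=
  ⟨hs, fun _ _ => Iff.rfl⟩

lemma click_step [Fintype V] {O₁ O₂ : AcyclicOrientation G} {φ : V → ℤ}
    (hφ : ∀ a b, G.Adj a b → φ b - φ a = sg O₁ a b - sg O₂ a b)
    {a₀ b₀ : V} (hadj : G.Adj a₀ b₀) (hne : φ a₀ ≠ φ b₀) :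
    ∃ (O₁' : AcyclicOrientation G) (v : V),
      IsClick O₁ O₁' ∧
      (∀ a b, G.Adj a b → Function.update φ v (φ v + 2) b
        - Function.update φ v (φ v + 2) a = sg O₁' a b - sg O₂ a b) ∧
      φ v + 2 ≤ max (φ a₀) (φ b₀) := by
  classical
  set comp : Finset V := Finset.univ.filter (fun x => G.Reachable a₀ x) with hcomp
  have hmem : ∀ {x : V}, x ∈ comp ↔ G.Reachable a₀ x := by
    intro x; simp [hcomp]
  have ha₀ : a₀ ∈ comp := hmem.mpr (SimpleGraph.Reachable.refl a₀)
  have hb₀ : b₀ ∈ comp := hmem.mpr hadj.reachable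
  have hcompne : comp.Nonempty := ⟨a₀, ha₀⟩
  set m := comp.inf' hcompne φ with hm
  have hmle : ∀ x ∈ comp, m ≤ φ x := fun x hx => Finset.inf'_le φ hx
  set W : Finset V := comp.filter (fun x => φ x = m) with hW
  have hWne : ∃ w, w ∈ {x | x ∈ W} := by
    obtain ⟨w, hw, hwm⟩ := Finset.exists_mem_eq_inf' hcompne φ
    exact ⟨w, Finset.mem_filter.mpr ⟨hw, hwm.symm⟩⟩
  haveI : IsTrans V (Relation.TransGen O₁.dir) := ⟨fun _ _ _ h1 h2 => h1.trans h2⟩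
  haveI : IsIrrefl V (Relation.TransGen O₁.dir) := ⟨O₁.acyclic⟩
  obtain ⟨v, hvW, hvmin⟩ := (Finite.wellFounded_of_trans_of_irrefl
      (Relation.TransGen O₁.dir)).has_min {x | x ∈ W} hWne
  have hvW' : v ∈ W := hvW
  have hvcomp : v ∈ comp := (Finset.mem_filter.mp hvW').1
  have hφv : φ v = m := (Finset.mem_filter.mp hvW').2
  have hsource : O₁.IsSource v := by
    intro a ha
    have hadj' : G.Adj a v := O₁.dir_adj ha
    have hacomp : a ∈ comp := hmem.mpr ((hmem.mp hvcomp).trans hadj'.symm.reachable)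
    have h1 := hφ a v hadj'
    have hsg1 : sg O₁ a v = 1 := by simp [sg, ha]
    have hge : m ≤ φ a := hmle a hacomp
    have haW : a ∈ W := by
      refine Finset.mem_filter.mpr ⟨hacomp, ?_⟩
      rcases sg_cases O₂ a v with h2 | h2 <;> rw [hsg1, h2] at h1 <;> omega
    exact hvmin a haW (Relation.TransGen.single ha)
  refine ⟨clickOrient O₁ v hsource, v, ⟨v, clickAt_clickOrient O₁ v hsource⟩, ?_, ?_⟩
  · intro a b hab
    have hdirv : ∀ c, G.Adj v c → O₁.dir v c := fun c hc => dir_of_not_dir O₁ hc (hsource c)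
    by_cases ha : a = v
    · subst ha
      have hbv : b ≠ a := fun hh => G.loopless.irrefl a (hh ▸ hab)
      rw [Function.update_self, Function.update_of_ne hbv]
      have h1 := hφ a b hab
      have hs1 : sg O₁ a b = 1 := by simp [sg, hdirv b hab]
      have hs1' : sg (clickOrient O₁ a hsource) a b = -1 := by
        have hnd : ¬ (clickOrient O₁ a hsource).dir a b := clickDir_not_from hsource b
        simp [sg, hnd]
      rw [hs1'] ; rw [hs1] at h1 ; omega
    · by_cases hb : b = v
      · subst hb
        rw [Function.update_self, Function.update_of_ne ha]
        have h1 := hφ a b hab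
        have hd : O₁.dir b a := hdirv a hab.symm
        have hs1 : sg O₁ a b = -1 := by simp [sg, asymm O₁ hd]
        have hs1' : sg (clickOrient O₁ b hsource) a b = 1 := by
          have hdd : (clickOrient O₁ b hsource).dir a b := Or.inl ⟨Or.inr rfl, hd⟩
          simp [sg, hdd]
        rw [hs1'] ; rw [hs1] at h1 ; omega
      · rw [Function.update_of_ne ha, Function.update_of_ne hb]
        have hiff : (clickOrient O₁ v hsource).dir a b ↔ O₁.dir a b := by
          constructor
          · rintro (⟨h3 | h3, -⟩ | ⟨-, -, h3⟩)
            · exact absurd h3 ha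
            · exact absurd h3 hb
            · exact h3
          · intro h3; exact Or.inr ⟨ha, hb, h3⟩
        have hs : sg (clickOrient O₁ v hsource) a b = sg O₁ a b := by
          by_cases hd : O₁.dir a b
          · have := hiff.mpr hd; simp [sg, hd, this]
          · have hnd : ¬ (clickOrient O₁ v hsource).dir a b := fun h3 => hd (hiff.mp h3)
            simp [sg, hd, hnd]
        rw [hs]
        exact hφ a b hab
  · have h1 : m ≤ φ a₀ := hmle _ ha₀
    have h2 : m ≤ φ b₀ := hmle _ hb₀
    have hparity : ∀ x ∈ comp, 2 ∣ (φ x - m) := by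
      intro x hx
      obtain ⟨w⟩ := ((hmem.mp hvcomp).symm.trans (hmem.mp hx) : G.Reachable v x)
      have hp := pot_walk_even (O₁ := O₁) (O₂ := O₂) hφ w
      rwa [hφv] at hp
    rcases lt_or_gt_of_ne hne with hlt | hlt
    · have hdv := hparity b₀ hb₀
      have hb2 : m + 2 ≤ φ b₀ := by omega
      calc φ v + 2 = m + 2 := by rw [hφv]
        _ ≤ φ b₀ := hb2
        _ ≤ max (φ a₀) (φ b₀) := le_max_right _ _
    · have hdv := hparity a₀ ha₀
      have ha2 : m + 2 ≤ φ a₀ := by omega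
      calc φ v + 2 = m + 2 := by rw [hφv]
        _ ≤ φ a₀ := ha2
        _ ≤ max (φ a₀) (φ b₀) := le_max_left _ _

lemma click_main [Fintype V] {O₂ : AcyclicOrientation G} :
    ∀ (n : ℕ) (O₁ : AcyclicOrientation G) (φ : V → ℤ) (C : ℤ),
      (∀ a b, G.Adj a b → φ b - φ a = sg O₁ a b - sg O₂ a b) →
      (∀ x, φ x ≤ C) →
      (∑ x : V, (C - φ x).toNat) ≤ n →
      ClickEquiv O₁ O₂ := by
  intro n
  induction n with
  | zero =>
    intro O₁ φ C hφ hub hN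
    have hall : ∀ a b, G.Adj a b → (O₁.dir a b ↔ O₂.dir a b) := by
      intro a b hab
      have hC : ∀ x, φ x = C := by
        intro x
        have h0 : (C - φ x).toNat = 0 :=
          Finset.sum_eq_zero_iff.mp (Nat.le_zero.mp hN) x (Finset.mem_univ x)
        have := hub x; omega
      have h1 := hφ a b hab
      rw [hC a, hC b, sub_self] at h1
      constructor
      · intro hd; by_contra hd2; simp [sg, hd, hd2] at h1
      · intro hd; by_contra hd2; simp [sg, hd, hd2] at h1
    rw [eq_of_agree hall]
    exact Relation.ReflTransGen.refl
  | succ n ih =>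
    intro O₁ φ C hφ hub hN
    by_cases hall : ∀ a b, G.Adj a b → (O₁.dir a b ↔ O₂.dir a b)
    · rw [eq_of_agree hall]
      exact Relation.ReflTransGen.refl
    · obtain ⟨a₀, h₀⟩ := not_forall.mp hall
      obtain ⟨b₀, h₁⟩ := not_forall.mp h₀
      obtain ⟨hadj, hniff⟩ := Classical.not_imp.mp h₁
      have hne : φ a₀ ≠ φ b₀ := by
        intro heq
        have h1 := hφ a₀ b₀ hadj
        rw [heq, sub_self] at h1
        refine hniff ⟨fun hd => ?_, fun hd => ?_⟩
        · by_contra hd2; simp [sg, hd, hd2] at h1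
        · by_contra hd2; simp [sg, hd, hd2] at h1
      obtain ⟨O₁', v, hclick, hφ', hmax⟩ := click_step hφ hadj hne
      have hv2 : φ v + 2 ≤ C := le_trans hmax (max_le (hub a₀) (hub b₀))
      have hub' : ∀ x, Function.update φ v (φ v + 2) x ≤ C := by
        intro x
        by_cases hx : x = v
        · subst hx; rw [Function.update_self]; exact hv2
        · rw [Function.update_of_ne hx]; exact hub x
      have hsum : (∑ x : V, (C - Function.update φ v (φ v + 2) x).toNat) ≤ n := by
        have hrest : ∀ x ∈ Finset.univ.erase v,
            (C - Function.update φ v (φ v + 2) x).toNat = (C - φ x).toNat := by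
          intro x hx
          rw [Function.update_of_ne (Finset.mem_erase.mp hx).1]
        have hesum : ∑ x ∈ Finset.univ.erase v, (C - Function.update φ v (φ v + 2) x).toNat
            = ∑ x ∈ Finset.univ.erase v, (C - φ x).toNat :=
          Finset.sum_congr rfl hrest
        have e1 : (C - φ v).toNat + ∑ x ∈ Finset.univ.erase v, (C - φ x).toNat
            = ∑ x : V, (C - φ x).toNat :=
          Finset.add_sum_erase Finset.univ (fun x => (C - φ x).toNat) (Finset.mem_univ v)
        have e2 : (C - Function.update φ v (φ v + 2) v).toNat
              + ∑ x ∈ Finset.univ.erase v, (C - Function.update φ v (φ v + 2) x).toNat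
            = ∑ x : V, (C - Function.update φ v (φ v + 2) x).toNat :=
          Finset.add_sum_erase Finset.univ
            (fun x => (C - Function.update φ v (φ v + 2) x).toNat) (Finset.mem_univ v)
        have hvv : (C - Function.update φ v (φ v + 2) v).toNat + 2 = (C - φ v).toNat := by
          rw [Function.update_self]; omega
        omega
      exact Relation.ReflTransGen.head hclick (ih O₁' _ C hφ' hub' hsum)

end ClickPf

/-- With respect to a fixed cycle basis `B`, two acyclic orientations are click-equivalent iff
`ν_C` agrees on every basis cycle `C`. -/
theorem clickEquiv_iff_nu_eq_on_basis [Fintype V] [DecidableEq V] (G : SimpleGraph V)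
    (B : List ((u : V) × G.Walk u u))
    (hBcyc : ∀ pb ∈ B, pb.2.IsCycle)
    (hBspan : ∀ (u : V) (p : G.Walk u u), p.IsCycle →
      ∃ coef : Fin B.length → ℤ, ∀ a b : V,
        walkVec G p a b = ∑ i : Fin B.length, coef i * walkVec G (B.get i).2 a b)
    (O₁ O₂ : AcyclicOrientation G) :
    ClickEquiv O₁ O₂ ↔ ∀ pb ∈ B, nu O₁ pb.2 = nu O₂ pb.2 := by
  constructor
  · intro h pb _
    exact ClickPf.nu_clickEquiv h pb.2
  · intro hnu
    classical
    by_cases hV : Nonempty V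
    · haveI := hV
      have hcyc : ∀ (u : V) (p : G.Walk u u), p.IsCycle → nu O₁ p = nu O₂ p :=
        fun u p hp => ClickPf.nu_eq_on_cycles B hBspan hnu p hp
      have hclosed := ClickPf.nu_eq_closed hcyc
      have hcl : ∀ (u : V) (p : G.Walk u u), ClickPf.Dsum O₁ O₂ p = 0 :=
        fun u p => by rw [ClickPf.Dsum_eq, hclosed u p, sub_self]
      have hφ : ∀ a b, G.Adj a b → ClickPf.pot O₁ O₂ b - ClickPf.pot O₁ O₂ a
          = ClickPf.sg O₁ a b - ClickPf.sg O₂ a b :=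
        fun a b hab => ClickPf.pot_adj hcl hab
      exact ClickPf.click_main _ O₁ (ClickPf.pot O₁ O₂)
        (Finset.univ.sup' Finset.univ_nonempty (ClickPf.pot O₁ O₂)) hφ
        (fun x => Finset.le_sup' (ClickPf.pot O₁ O₂) (Finset.mem_univ x)) le_rfl
    · have hEq : O₁ = O₂ :=
        ClickPf.eq_of_agree (fun a b _ => absurd (Nonempty.intro a) hV)
      rw [hEq]
      exact Relation.ReflTransGen.refl
end

section
/- Let Γ be a finite simple graph with a directed edge (v,w) in an acyclic orientation O, and let c be a click-sequence applicable to O. Then between any two consecutive occurrences of v in c there is exactly one occurrence of w, and w cannot occur before the first occurrence of v. -/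
variable {V : Type*}

open AcyclicOrientation

section Counts
variable [DecidableEq V]
lemma clickSeq_counts {G : SimpleGraph V} :
    ∀ {O O₂ : AcyclicOrientation G} {c : List V}, ClickSeq O c O₂ →
    ∀ v w, O.dir v w → ∀ n,
      (c.take n).count w ≤ (c.take n).count v ∧
      (c.take n).count v ≤ (c.take n).count w + 1 := by
  intro O O₂ c h
  induction h with
  | nil O => intro v w hd n; simp
  | @cons O O' O'' u c' hcl hseq ih =>
    intro v w hd n
    have hvw : v ≠ w := (O.dir_adj hd).ne
    obtain ⟨hsrc, hdir⟩ := hcl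
    cases n with
    | zero => simp
    | succ m =>
      rw [List.take_succ_cons]
      by_cases huv : u = v
      · have hd' : O'.dir w v := by
          rw [hdir w v]; exact Or.inl ⟨Or.inr huv.symm, hd⟩
        have := ih w v hd' m
        simp [List.count_cons, huv, hvw, Ne.symm hvw]
        omega
      · have huw : u ≠ w := by
          rintro rfl; exact hsrc v hd
        have hd' : O'.dir v w := by
          rw [hdir v w]
          exact Or.inr ⟨fun hh => huv hh.symm, fun hh => huw hh.symm, hd⟩
        have := ih v w hd' m
        simp [List.count_cons, huv, huw, Ne.symm huv, Ne.symm huw]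
        omega
end Counts
section Extract
variable [DecidableEq V]

lemma count_take_succ' (c : List V) (x : V) (j : ℕ) (hj : j < c.length) :
    (c.take (j+1)).count x = (c.take j).count x + if (c)[j] = x then 1 else 0 := by
  rw [List.take_succ, List.getElem?_eq_getElem hj, List.count_append]
  by_cases h : (c)[j] = x
  · simp [h]
  · simp only [if_neg h, Option.toList_some, List.count_singleton']


lemma count_take_mono (c : List V) (x : V) {m n : ℕ} (h : m ≤ n) :
    (c.take m).count x ≤ (c.take n).count x := by
  have e : c.take m = (c.take n).take m := by rw [List.take_take, min_eq_left h]
  rw [e]; exact (List.take_sublist _ _).count_le x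

lemma count_take_split (c : List V) (x : V) {i n : ℕ} (h : i ≤ n) :
    (c.take n).count x = (c.take i).count x + ((c.take n).drop i).count x := by
  conv_lhs => rw [← List.take_append_drop i (c.take n)]
  rw [List.count_append, List.take_take, min_eq_left h]

lemma counts_to_occurrences (v w : V) (hvw : v ≠ w) (c : List V)
    (H : ∀ n, (c.take n).count w ≤ (c.take n).count v ∧
      (c.take n).count v ≤ (c.take n).count w + 1) :
    (∀ j : Fin c.length, c.get j = w → ∃ i : Fin c.length, i < j ∧ c.get i = v) ∧
    (∀ i₁ i₂ : Fin c.length, i₁ < i₂ → c.get i₁ = v → c.get i₂ = v →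
      (∀ k : Fin c.length, i₁ < k → k < i₂ → c.get k ≠ v) →
      ∃! j : Fin c.length, i₁ < j ∧ j < i₂ ∧ c.get j = w) := by
  -- step facts
  have step : ∀ (x : V) (j : ℕ) (hj : j < c.length),
      (c.take (j+1)).count x = (c.take j).count x + if (c)[j] = x then 1 else 0 :=
    fun x j hj => count_take_succ' c x j hj
  constructor
  · -- part 1
    intro j hj
    have hjw : (c)[j.val] = w := by rwa [List.get_eq_getElem] at hj
    have h1 := step w j.val j.isLt
    have h2 := step v j.val j.isLt
    rw [hjw] at h1 h2
    simp [Ne.symm hvw] at h1 h2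
    have hH := (H (j.val+1)).1
    have hpos : 0 < (c.take j.val).count v := by omega
    rw [List.count_pos_iff] at hpos
    obtain ⟨p, hp, hpv⟩ := List.mem_iff_getElem.1 hpos
    have hpl : p < j.val := by
      have := hp; simp [List.length_take] at this; omega
    have hpc : p < c.length := lt_of_lt_of_le hpl (le_of_lt j.isLt)
    refine ⟨⟨p, hpc⟩, hpl, ?_⟩
    rw [List.get_eq_getElem]
    rw [List.getElem_take] at hpv
    exact hpv
  · -- part 2
    intro i₁ i₂ hlt h1v h2v hno
    rw [List.get_eq_getElem] at h1v h2v
    have hlt' : i₁.val < i₂.val := hlt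
    -- t := count w (take i₁)
    set t := (c.take i₁.val).count w with ht
    have s1 := step v i₁.val i₁.isLt
    have s2 := step w i₁.val i₁.isLt
    rw [h1v] at s1 s2
    simp [hvw] at s1 s2
    have heq : (c.take i₁.val).count v = t := by
      have a1 := (H i₁.val).1
      have a2 := (H (i₁.val+1)).2
      omega
    -- plateau
    have plateau : ∀ n, i₁.val + 1 ≤ n → n ≤ i₂.val → (c.take n).count v = t + 1 := by
      intro n hn1 hn2
      have hsplit := count_take_split c v (n := n) (i := i₁.val + 1) hn1
      have hzero : ((c.take n).drop (i₁.val+1)).count v = 0 := by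
        rw [List.count_eq_zero]
        intro hmem
        obtain ⟨p, hp, hpv⟩ := List.mem_iff_getElem.1 hmem
        have hlen : i₁.val + 1 + p < n ∧ i₁.val + 1 + p < c.length := by
          simp [List.length_drop, List.length_take] at hp; omega
        have : (c)[i₁.val + 1 + p] = v := by
          rw [List.getElem_drop, List.getElem_take] at hpv; exact hpv
        exact hno ⟨i₁.val+1+p, hlen.2⟩ (by simp [Fin.lt_def]; omega)
          (by simp [Fin.lt_def]; omega) (by rw [List.get_eq_getElem]; exact this)
      omega
    have hi2v : (c.take i₂.val).count v = t + 1 := plateau i₂.val (by omega) le_rfl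
    have s3 := step v i₂.val i₂.isLt
    have s4 := step w i₂.val i₂.isLt
    rw [h2v] at s3 s4
    simp [hvw] at s3 s4
    have hw2 : (c.take i₂.val).count w = t + 1 := by
      have b1 := (H i₂.val).1
      have b2 := (H (i₂.val+1)).2
      omega
    -- existence: one w in the slice
    have hsplitw := count_take_split c w (n := i₂.val) (i := i₁.val + 1) (by omega)
    have hslice : ((c.take i₂.val).drop (i₁.val+1)).count w = 1 := by omega
    have hmemw : w ∈ (c.take i₂.val).drop (i₁.val+1) := by
      rw [← List.count_pos_iff]; omega
    obtain ⟨p, hp, hpw⟩ := List.mem_iff_getElem.1 hmemw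
    have hjb : i₁.val + 1 + p < i₂.val ∧ i₁.val + 1 + p < c.length := by
      simp [List.length_drop, List.length_take] at hp; omega
    have hjw : (c)[i₁.val+1+p] = w := by
      rw [List.getElem_drop, List.getElem_take] at hpw; exact hpw
    -- uniqueness helper
    have uniq : ∀ a b : ℕ, a < b → i₁.val < a → b < i₂.val →
        (ha : a < c.length) → (hb : b < c.length) → (c)[a] = w → (c)[b] = w → False := by
      intro a b hab ha1 hb2 ha hb haw hbw
      have m1 : t ≤ (c.take a).count w := count_take_mono c w (by omega : i₁.val ≤ a)
      have e1 := step w a ha; rw [haw] at e1; simp at e1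
      have m2 : (c.take (a+1)).count w ≤ (c.take b).count w :=
        count_take_mono c w (by omega)
      have e2 := step w b hb; rw [hbw] at e2; simp at e2
      have hv' : (c.take (b+1)).count v = t + 1 := plateau (b+1) (by omega) (by omega)
      have := (H (b+1)).1
      omega
    refine ⟨⟨i₁.val+1+p, hjb.2⟩, ⟨by simp [Fin.lt_def]; omega, by simp [Fin.lt_def]; exact hjb.1,
      by rw [List.get_eq_getElem]; exact hjw⟩, ?_⟩
    rintro y ⟨hy1, hy2, hyw⟩
    rw [List.get_eq_getElem] at hyw
    have hy1' : i₁.val < y.val := hy1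
    have hy2' : y.val < i₂.val := hy2
    by_contra hne
    have hne' : y.val ≠ i₁.val+1+p := fun h => hne (Fin.ext h)
    rcases Nat.lt_or_ge y.val (i₁.val+1+p) with hc | hc
    · exact uniq y.val (i₁.val+1+p) hc hy1' hjb.1 y.isLt hjb.2 hyw hjw
    · exact uniq (i₁.val+1+p) y.val (by omega) (by omega) hy2' hjb.2 y.isLt hjw hyw
end Extract
/-- For a directed edge `(v,w)` of `O`: in any click-sequence, `w` never occurs before the first
occurrence of `v`, and between two consecutive occurrences of `v` there is exactly one `w`. -/
theorem edge_occurrences_in_click_sequence [Fintype V] (G : SimpleGraph V)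
    (v w : V) (O O₂ : AcyclicOrientation G) (hd : O.dir v w)
    (c : List V) (h : ClickSeq O c O₂) :
    (∀ j : Fin c.length, c.get j = w → ∃ i : Fin c.length, i < j ∧ c.get i = v) ∧
    (∀ i₁ i₂ : Fin c.length, i₁ < i₂ → c.get i₁ = v → c.get i₂ = v →
      (∀ k : Fin c.length, i₁ < k → k < i₂ → c.get k ≠ v) →
      ∃! j : Fin c.length, i₁ < j ∧ j < i₂ ∧ c.get j = w) := by

  classical
  have hvw : v ≠ w := (O.dir_adj hd).ne
  exact counts_to_occurrences v w hvw c (clickSeq_counts h v w hd)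
end
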